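/- arXiv:1810.06440 — 4 statements merged into one kernel-verified Lean document; each statement's English description precedes it below -/
import Mathlib

section
/- Let p > 1/2, s ≥ 0, a ≥ 0 and 0 < θ < 1. For sequences f, g : ℤ → ℂ with ‖f‖_{p,s,a} < ∞ and ‖g‖_{p,s,a} < ∞, the convolution f⋆g defined by (f⋆g)_j := ∑_{i∈ℤ} f_i g_{j−i} is well defined (all series converge absolutely) and satisfies ‖f⋆g‖_{p,s,a} ≤ C_alg(p) · ‖f‖_{p,s,a} · ‖g‖_{p,s,a}, where C_alg(p) := 2^p (∑_{i∈ℤ} ⟨i⟩^{−2p})^{1/2}. -/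
open scoped BigOperators

/-- `⟨j⟩ := max(|j|,1)` as a real number. -/
noncomputable def jap (j : ℤ) : ℝ := max (|(j : ℝ)|) 1

/-- Weight for the Gevrey/Sobolev weighted ℓ² norm:
`⟨j⟩^{2p} e^{2a|j| + 2s⟨j⟩^θ}`. -/
noncomputable def gevreyWeight (p s a θ : ℝ) (j : ℤ) : ℝ :=
  jap j ^ (2 * p) * Real.exp (2 * a * |(j : ℝ)| + 2 * s * jap j ^ θ)

/-- The algebra constant `C_alg(p) := 2^p (∑_{i∈ℤ} ⟨i⟩^{−2p})^{1/2}`. -/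
noncomputable def Calg (p : ℝ) : ℝ :=
  (2 : ℝ) ^ p * Real.sqrt (∑' i : ℤ, jap i ^ (-(2 * p)))

lemma one_le_jap (j : ℤ) : 1 ≤ jap j := le_max_right _ _
lemma jap_pos (j : ℤ) : 0 < jap j := lt_of_lt_of_le one_pos (one_le_jap j)
lemma abs_le_jap (j : ℤ) : |(j : ℝ)| ≤ jap j := le_max_left _ _

lemma jap_le_add (i j : ℤ) : jap j ≤ jap i + jap (j - i) := by
  apply max_le
  · have h : (j : ℝ) = (i : ℝ) + ((j - i : ℤ) : ℝ) := by push_cast; ring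
    calc |(j : ℝ)| = |(i : ℝ) + ((j - i : ℤ) : ℝ)| := by rw [← h]
      _ ≤ |(i : ℝ)| + |((j - i : ℤ) : ℝ)| := abs_add_le _ _
      _ ≤ jap i + jap (j - i) := add_le_add (abs_le_jap i) (abs_le_jap (j - i))
  · linarith [one_le_jap i, (jap_pos (j - i)).le]

lemma rpow_add_le_add_rpow_real {x y θ : ℝ} (hx : 0 ≤ x) (hy : 0 ≤ y)
    (h0 : 0 ≤ θ) (h1 : θ ≤ 1) : (x + y) ^ θ ≤ x ^ θ + y ^ θ := by
  have h := NNReal.rpow_add_le_add_rpow (⟨x, hx⟩ : NNReal) (⟨y, hy⟩ : NNReal) h0 h1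
  have := NNReal.coe_le_coe.2 h
  exact_mod_cast this

lemma add_rpow_le_two_rpow {A B q : ℝ} (hA : 0 ≤ A) (hB : 0 ≤ B) (hq : 1 ≤ q) :
    (A + B) ^ q ≤ 2 ^ (q - 1) * (A ^ q + B ^ q) := by
  have h := NNReal.rpow_add_le_mul_rpow_add_rpow (⟨A, hA⟩ : NNReal) (⟨B, hB⟩ : NNReal) hq
  have h2 := NNReal.coe_le_coe.2 h
  exact_mod_cast h2

lemma weight_pos (p s a θ : ℝ) (j : ℤ) : 0 < gevreyWeight p s a θ j :=
  mul_pos (Real.rpow_pos_of_pos (jap_pos j) _) (Real.exp_pos _)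

lemma one_le_weight {p s a θ : ℝ} (hp : 0 ≤ p) (hs : 0 ≤ s) (ha : 0 ≤ a) (hθ : 0 ≤ θ)
    (j : ℤ) : 1 ≤ gevreyWeight p s a θ j := by
  have h1 : 1 ≤ jap j ^ (2 * p) := by
    simpa using Real.rpow_le_rpow_of_exponent_le (one_le_jap j)
      (show (0:ℝ) ≤ 2 * p by linarith)
  have h2 : (1:ℝ) ≤ Real.exp (2 * a * |(j:ℝ)| + 2 * s * jap j ^ θ) := by
    apply Real.one_le_exp
    have e1 : 0 ≤ 2 * a * |(j:ℝ)| := by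
      have := abs_nonneg ((j:ℝ)); nlinarith
    have e2 : 0 ≤ 2 * s * jap j ^ θ := by
      have := Real.rpow_nonneg (jap_pos j).le θ; nlinarith
    linarith
  calc (1:ℝ) = 1 * 1 := by ring
    _ ≤ _ := mul_le_mul h1 h2 (by norm_num) (by linarith)

lemma abs_cast_le (i j : ℤ) : |(j:ℝ)| ≤ |(i:ℝ)| + |((j - i : ℤ):ℝ)| := by
  have h : (j : ℝ) = (i : ℝ) + ((j - i : ℤ) : ℝ) := by push_cast; ring
  calc |(j:ℝ)| = |(i : ℝ) + ((j - i : ℤ) : ℝ)| := by rw [← h]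
    _ ≤ _ := abs_add_le _ _

lemma weight_key {p s a θ : ℝ} (hp : 1/2 < p) (hs : 0 ≤ s) (ha : 0 ≤ a)
    (hθ0 : 0 < θ) (hθ1 : θ < 1) (j i : ℤ) :
    gevreyWeight p s a θ j ≤
      2 ^ (2*p - 1) * (jap i ^ (-(2*p)) + jap (j - i) ^ (-(2*p))) *
        (gevreyWeight p s a θ i * gevreyWeight p s a θ (j - i)) := by
  have hA := jap_pos i
  have hB := jap_pos (j - i)
  have hq : 1 ≤ 2 * p := by linarith
  have hpow : jap j ^ (2*p) ≤ 2 ^ (2*p - 1) * (jap i ^ (2*p) + jap (j-i) ^ (2*p)) :=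
    calc jap j ^ (2*p) ≤ (jap i + jap (j-i)) ^ (2*p) :=
          Real.rpow_le_rpow (jap_pos j).le (jap_le_add i j) (by linarith)
      _ ≤ _ := add_rpow_le_two_rpow hA.le hB.le hq
  have hid : jap i ^ (2*p) + jap (j-i) ^ (2*p) =
      (jap i ^ (-(2*p)) + jap (j-i) ^ (-(2*p))) * (jap i ^ (2*p) * jap (j-i) ^ (2*p)) := by
    rw [Real.rpow_neg hA.le, Real.rpow_neg hB.le]
    have h1 : jap i ^ (2*p) ≠ 0 := (Real.rpow_pos_of_pos hA _).ne'
    have h2 : jap (j-i) ^ (2*p) ≠ 0 := (Real.rpow_pos_of_pos hB _).ne'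
    field_simp
    ring
  have hexp : Real.exp (2*a*|(j:ℝ)| + 2*s*jap j ^ θ) ≤
      Real.exp (2*a*|(i:ℝ)| + 2*s*jap i ^ θ) *
        Real.exp (2*a*|((j-i:ℤ):ℝ)| + 2*s*jap (j-i) ^ θ) := by
    rw [← Real.exp_add]
    apply Real.exp_le_exp.2
    have habs := abs_cast_le i j
    have hθsub : jap j ^ θ ≤ jap i ^ θ + jap (j-i) ^ θ :=
      calc jap j ^ θ ≤ (jap i + jap (j-i)) ^ θ :=
            Real.rpow_le_rpow (jap_pos j).le (jap_le_add i j) hθ0.le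
        _ ≤ _ := rpow_add_le_add_rpow_real hA.le hB.le hθ0.le hθ1.le
    have m1 : 2*a*|(j:ℝ)| ≤ 2*a*(|(i:ℝ)| + |((j-i:ℤ):ℝ)|) :=
      mul_le_mul_of_nonneg_left habs (by linarith)
    have m2 : 2*s*jap j ^ θ ≤ 2*s*(jap i ^ θ + jap (j-i) ^ θ) :=
      mul_le_mul_of_nonneg_left hθsub (by linarith)
    linarith
  have hpow' : jap j ^ (2*p) ≤
      2 ^ (2*p - 1) * (jap i ^ (-(2*p)) + jap (j-i) ^ (-(2*p))) *
        (jap i ^ (2*p) * jap (j-i) ^ (2*p)) := by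
    rw [mul_assoc, ← hid]; exact hpow
  have hC : 0 ≤ 2 ^ (2*p - 1) * (jap i ^ (-(2*p)) + jap (j-i) ^ (-(2*p))) *
      (jap i ^ (2*p) * jap (j-i) ^ (2*p)) := by
    have := Real.rpow_nonneg hA.le (-(2*p))
    have := Real.rpow_nonneg hB.le (-(2*p))
    have := Real.rpow_nonneg hA.le (2*p)
    have := Real.rpow_nonneg hB.le (2*p)
    have : (0:ℝ) ≤ 2 ^ (2*p-1) := (Real.rpow_pos_of_pos two_pos _).le
    positivity
  unfold gevreyWeight
  calc jap j ^ (2*p) * Real.exp (2*a*|(j:ℝ)| + 2*s*jap j ^ θ)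
      ≤ (2 ^ (2*p - 1) * (jap i ^ (-(2*p)) + jap (j-i) ^ (-(2*p))) *
          (jap i ^ (2*p) * jap (j-i) ^ (2*p))) *
        (Real.exp (2*a*|(i:ℝ)| + 2*s*jap i ^ θ) *
          Real.exp (2*a*|((j-i:ℤ):ℝ)| + 2*s*jap (j-i) ^ θ)) :=
        mul_le_mul hpow' hexp (Real.exp_pos _).le hC
    _ = _ := by ring

lemma summable_jap_neg {q : ℝ} (hq : 1 < q) : Summable (fun i : ℤ => jap i ^ (-q)) := by
  have h0 := Real.summable_abs_int_rpow hq
  refine (h0.update 0 1).congr fun i => ?_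
  by_cases hi : i = 0
  · subst hi
    simp [Function.update_self, jap]
  · rw [Function.update_of_ne hi]
    have h1 : (1:ℝ) ≤ |(i:ℝ)| := by
      have := Int.one_le_abs (by simpa using hi)
      calc (1:ℝ) ≤ ((|i| : ℤ) : ℝ) := by exact_mod_cast this
        _ = |(i:ℝ)| := by push_cast; ring
    rw [jap, max_eq_left h1]

lemma tsum_sqrt_mul_sqrt {A B : ℤ → ℝ} (hA0 : ∀ i, 0 ≤ A i) (hB0 : ∀ i, 0 ≤ B i)
    (hA : Summable A) (hB : Summable B) :
    ∑' i, Real.sqrt (A i) * Real.sqrt (B i) ≤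
      Real.sqrt (∑' i, A i) * Real.sqrt (∑' i, B i) := by
  have hsum : Summable fun i => Real.sqrt (A i) * Real.sqrt (B i) := by
    refine (hA.add hB).of_nonneg_of_le (fun i => by positivity) (fun i => ?_)
    nlinarith [Real.sq_sqrt (hA0 i), Real.sq_sqrt (hB0 i), Real.sqrt_nonneg (A i),
      Real.sqrt_nonneg (B i), sq_nonneg (Real.sqrt (A i) - Real.sqrt (B i))]
  refine hsum.tsum_le_of_sum_le (fun sfin => ?_)
  rw [← Real.sqrt_mul (tsum_nonneg fun i => hA0 i)]
  refine Real.le_sqrt_of_sq_le ?_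
  calc (∑ i ∈ sfin, Real.sqrt (A i) * Real.sqrt (B i)) ^ 2
      ≤ (∑ i ∈ sfin, Real.sqrt (A i) ^ 2) * (∑ i ∈ sfin, Real.sqrt (B i) ^ 2) :=
        Finset.sum_mul_sq_le_sq_mul_sq sfin _ _
    _ = (∑ i ∈ sfin, A i) * (∑ i ∈ sfin, B i) := by
        congr 1 <;> exact Finset.sum_congr rfl fun i _ => Real.sq_sqrt (by first | exact hA0 i | exact hB0 i)
    _ ≤ (∑' i, A i) * (∑' i, B i) := by
        apply mul_le_mul (Summable.sum_le_tsum sfin (fun i _ => hA0 i) hA)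
          (Summable.sum_le_tsum sfin (fun i _ => hB0 i) hB)
          (Finset.sum_nonneg fun i _ => hB0 i) (tsum_nonneg fun i => hA0 i)

lemma sqrt_mul_sqrt_le_add {x y : ℝ} (hx : 0 ≤ x) (hy : 0 ≤ y) :
    Real.sqrt x * Real.sqrt y ≤ x + y := by
  nlinarith [Real.sq_sqrt hx, Real.sq_sqrt hy, sq_nonneg (Real.sqrt x - Real.sqrt y),
    Real.sqrt_nonneg x, Real.sqrt_nonneg y]

lemma summable_sqrt_mul {A B : ℤ → ℝ} (hA0 : ∀ i, 0 ≤ A i) (hB0 : ∀ i, 0 ≤ B i)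
    (hA : Summable A) (hB : Summable B) :
    Summable fun i => Real.sqrt (A i) * Real.sqrt (B i) :=
  (hA.add hB).of_nonneg_of_le (fun i => by positivity)
    (fun i => sqrt_mul_sqrt_le_add (hA0 i) (hB0 i))

lemma main_aux (W : ℤ → ℝ) (hW1 : ∀ j, 1 ≤ W j) (S2 : ℝ)
    (c : ℤ → ℤ → ℝ) (hc0 : ∀ j i, 0 ≤ c j i) (hcs : ∀ j, Summable (c j))
    (hct : ∀ j, ∑' i, c j i ≤ S2)
    (hkey : ∀ j i, W j ≤ c j i * (W i * W (j - i)))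
    (f g : ℤ → ℂ)
    (hf : Summable fun j : ℤ => ‖f j‖ ^ 2 * W j)
    (hg : Summable fun j : ℤ => ‖g j‖ ^ 2 * W j) :
    (∀ j : ℤ, Summable fun i : ℤ => ‖f i‖ * ‖g (j - i)‖) ∧
    (Summable fun j : ℤ => ‖∑' i : ℤ, f i * g (j - i)‖ ^ 2 * W j) ∧
    Real.sqrt (∑' j : ℤ, ‖∑' i : ℤ, f i * g (j - i)‖ ^ 2 * W j) ≤
      Real.sqrt S2 * Real.sqrt (∑' j : ℤ, ‖f j‖ ^ 2 * W j) *
        Real.sqrt (∑' j : ℤ, ‖g j‖ ^ 2 * W j) := by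
  have hW0 : ∀ j, (0:ℝ) ≤ W j := fun j => zero_le_one.trans (hW1 j)
  set Φ : ℤ → ℝ := fun j : ℤ => ‖f j‖ ^ 2 * W j with hΦdef
  set Ψ : ℤ → ℝ := fun j : ℤ => ‖g j‖ ^ 2 * W j with hΨdef
  have hΦ0 : ∀ i, 0 ≤ Φ i := fun i => mul_nonneg (by positivity) (hW0 i)
  have hΨ0 : ∀ i, 0 ≤ Ψ i := fun i => mul_nonneg (by positivity) (hW0 i)
  have hfle : ∀ i, ‖f i‖ ≤ Real.sqrt (Φ i) := fun i =>
    Real.le_sqrt_of_sq_le (le_mul_of_one_le_right (by positivity) (hW1 i))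
  have hgle : ∀ i, ‖g i‖ ≤ Real.sqrt (Ψ i) := fun i =>
    Real.le_sqrt_of_sq_le (le_mul_of_one_le_right (by positivity) (hW1 i))
  have hΨshift : ∀ j : ℤ, Summable fun i => Ψ (j - i) := fun j =>
    hg.comp_injective (fun x y h => by omega)
  have hconv : ∀ j : ℤ, Summable fun i : ℤ => ‖f i‖ * ‖g (j - i)‖ := by
    intro j
    refine (hf.add (hΨshift j)).of_nonneg_of_le (fun i => by positivity) (fun i => ?_)
    calc ‖f i‖ * ‖g (j - i)‖ ≤ Real.sqrt (Φ i) * Real.sqrt (Ψ (j - i)) :=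
          mul_le_mul (hfle i) (hgle (j - i)) (norm_nonneg _) (Real.sqrt_nonneg _)
      _ ≤ Φ i + Ψ (j - i) := sqrt_mul_sqrt_le_add (hΦ0 i) (hΨ0 _)
  have hPprod : Summable (fun q : ℤ × ℤ => Φ q.1 * Ψ q.2) :=
    hf.mul_of_nonneg hg (fun i => hΦ0 i) (fun i => hΨ0 i)
  let e : ℤ × ℤ ≃ ℤ × ℤ :=
    { toFun := fun q => (q.2, q.1 - q.2)
      invFun := fun q => (q.1 + q.2, q.1)
      left_inv := by rintro ⟨x, y⟩; simp only [Prod.mk.injEq]; simp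
      right_inv := by rintro ⟨x, y⟩; simp only [Prod.mk.injEq]; simp }
  have hP2 : Summable (fun q : ℤ × ℤ => Φ q.2 * Ψ (q.1 - q.2)) :=
    (Equiv.summable_iff e).2 hPprod
  have hD : ∀ j : ℤ, Summable fun i => Φ i * Ψ (j - i) := fun j => hP2.prod_factor j
  have hD0 : ∀ j, 0 ≤ ∑' i, Φ i * Ψ (j - i) := fun j =>
    tsum_nonneg (fun i => mul_nonneg (hΦ0 i) (hΨ0 _))
  have hTotal : HasSum (fun j => ∑' i, Φ i * Ψ (j - i)) ((∑' j, Φ j) * ∑' j, Ψ j) := by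
    have h2 := e.tsum_eq (fun q : ℤ × ℤ => Φ q.1 * Ψ q.2)
    have h1 : ∑' q : ℤ × ℤ, Φ q.2 * Ψ (q.1 - q.2) = (∑' j, Φ j) * ∑' j, Ψ j := by
      rw [show (∑' q : ℤ × ℤ, Φ q.2 * Ψ (q.1 - q.2)) =
          ∑' q : ℤ × ℤ, Φ q.1 * Ψ q.2 from h2]
      exact (hf.tsum_mul_tsum hg hPprod).symm
    exact h1 ▸ (hP2.hasSum.prod_fiberwise (fun j => (hD j).hasSum))
  have hS20 : 0 ≤ S2 := le_trans (tsum_nonneg fun i => hc0 0 i) (hct 0)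
  have key : ∀ j : ℤ, ‖∑' i : ℤ, f i * g (j - i)‖ ^ 2 * W j ≤
      S2 * ∑' i, Φ i * Ψ (j - i) := by
    intro j
    have hT : Summable fun i : ℤ => ‖f i‖ * ‖g (j - i)‖ := hconv j
    have hT0 : 0 ≤ ∑' i, ‖f i‖ * ‖g (j - i)‖ := tsum_nonneg fun i => by positivity
    have hnorm : ‖∑' i : ℤ, f i * g (j - i)‖ ≤ ∑' i, ‖f i‖ * ‖g (j - i)‖ := by
      have h1 : Summable fun i : ℤ => ‖f i * g (j - i)‖ := by
        simpa [norm_mul] using hT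
      calc ‖∑' i : ℤ, f i * g (j - i)‖ ≤ ∑' i, ‖f i * g (j - i)‖ := norm_tsum_le_tsum_norm h1
        _ = ∑' i, ‖f i‖ * ‖g (j - i)‖ := by simp [norm_mul]
    have step : Real.sqrt (W j) * ∑' i, ‖f i‖ * ‖g (j - i)‖ ≤
        Real.sqrt S2 * Real.sqrt (∑' i, Φ i * Ψ (j - i)) := by
      have l2 : ∀ i, Real.sqrt (W j) * (‖f i‖ * ‖g (j - i)‖) ≤
          Real.sqrt (c j i) * Real.sqrt (Φ i * Ψ (j - i)) := by
        intro i
        have hx : (0:ℝ) ≤ ‖f i‖ * ‖g (j - i)‖ := by positivity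
        have h1 : W j * (‖f i‖ * ‖g (j - i)‖) ^ 2 ≤ c j i * (Φ i * Ψ (j - i)) := by
          have h2 := mul_le_mul_of_nonneg_right (hkey j i)
            (sq_nonneg (‖f i‖ * ‖g (j - i)‖))
          calc W j * (‖f i‖ * ‖g (j - i)‖) ^ 2
              ≤ (c j i * (W i * W (j - i))) * (‖f i‖ * ‖g (j - i)‖) ^ 2 := h2
            _ = c j i * (Φ i * Ψ (j - i)) := by simp only [hΦdef, hΨdef]; ring
        calc Real.sqrt (W j) * (‖f i‖ * ‖g (j - i)‖)
            = Real.sqrt (W j * (‖f i‖ * ‖g (j - i)‖) ^ 2) := by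
              rw [Real.sqrt_mul (hW0 j), Real.sqrt_sq hx]
          _ ≤ Real.sqrt (c j i * (Φ i * Ψ (j - i))) := Real.sqrt_le_sqrt h1
          _ = Real.sqrt (c j i) * Real.sqrt (Φ i * Ψ (j - i)) := Real.sqrt_mul (hc0 j i) _
      calc Real.sqrt (W j) * ∑' i, ‖f i‖ * ‖g (j - i)‖
          = ∑' i, Real.sqrt (W j) * (‖f i‖ * ‖g (j - i)‖) := tsum_mul_left.symm
        _ ≤ ∑' i, Real.sqrt (c j i) * Real.sqrt (Φ i * Ψ (j - i)) :=
            Summable.tsum_le_tsum l2 (hT.mul_left _)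
              (summable_sqrt_mul (hc0 j) (fun i => mul_nonneg (hΦ0 i) (hΨ0 _))
                (hcs j) (hD j))
        _ ≤ Real.sqrt (∑' i, c j i) * Real.sqrt (∑' i, Φ i * Ψ (j - i)) :=
            tsum_sqrt_mul_sqrt (hc0 j) (fun i => mul_nonneg (hΦ0 i) (hΨ0 _)) (hcs j) (hD j)
        _ ≤ Real.sqrt S2 * Real.sqrt (∑' i, Φ i * Ψ (j - i)) :=
            mul_le_mul_of_nonneg_right (Real.sqrt_le_sqrt (hct j)) (Real.sqrt_nonneg _)
    have sq1 : W j * (∑' i, ‖f i‖ * ‖g (j - i)‖) ^ 2 ≤ S2 * ∑' i, Φ i * Ψ (j - i) := by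
      have hss := mul_self_le_mul_self (by positivity) step
      have e1 : (Real.sqrt (W j) * ∑' i, ‖f i‖ * ‖g (j - i)‖) *
          (Real.sqrt (W j) * ∑' i, ‖f i‖ * ‖g (j - i)‖) =
          W j * (∑' i, ‖f i‖ * ‖g (j - i)‖) ^ 2 := by
        rw [mul_mul_mul_comm, Real.mul_self_sqrt (hW0 j)]; ring
      have e2 : (Real.sqrt S2 * Real.sqrt (∑' i, Φ i * Ψ (j - i))) *
          (Real.sqrt S2 * Real.sqrt (∑' i, Φ i * Ψ (j - i))) =
          S2 * ∑' i, Φ i * Ψ (j - i) := by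
        rw [mul_mul_mul_comm, Real.mul_self_sqrt hS20, Real.mul_self_sqrt (hD0 j)]
      rw [e1, e2] at hss
      exact hss
    have h3 : ‖∑' i : ℤ, f i * g (j - i)‖ ^ 2 ≤ (∑' i, ‖f i‖ * ‖g (j - i)‖) ^ 2 :=
      pow_le_pow_left₀ (norm_nonneg _) hnorm 2
    calc ‖∑' i : ℤ, f i * g (j - i)‖ ^ 2 * W j
        ≤ (∑' i, ‖f i‖ * ‖g (j - i)‖) ^ 2 * W j :=
          mul_le_mul_of_nonneg_right h3 (hW0 j)
      _ = W j * (∑' i, ‖f i‖ * ‖g (j - i)‖) ^ 2 := mul_comm _ _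
      _ ≤ S2 * ∑' i, Φ i * Ψ (j - i) := sq1
  have hsum2 : Summable fun j : ℤ => ‖∑' i : ℤ, f i * g (j - i)‖ ^ 2 * W j :=
    (hTotal.summable.mul_left S2).of_nonneg_of_le
      (fun j => mul_nonneg (by positivity) (hW0 j)) key
  refine ⟨hconv, hsum2, ?_⟩
  have hfin : ∑' j : ℤ, ‖∑' i : ℤ, f i * g (j - i)‖ ^ 2 * W j ≤
      S2 * ((∑' j, Φ j) * ∑' j, Ψ j) := by
    calc ∑' j : ℤ, ‖∑' i : ℤ, f i * g (j - i)‖ ^ 2 * W j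
        ≤ ∑' j, S2 * ∑' i, Φ i * Ψ (j - i) :=
          Summable.tsum_le_tsum key hsum2 (hTotal.summable.mul_left S2)
      _ = S2 * ∑' j, ∑' i, Φ i * Ψ (j - i) := tsum_mul_left
      _ = S2 * ((∑' j, Φ j) * ∑' j, Ψ j) := by rw [hTotal.tsum_eq]
  calc Real.sqrt (∑' j : ℤ, ‖∑' i : ℤ, f i * g (j - i)‖ ^ 2 * W j)
      ≤ Real.sqrt (S2 * ((∑' j, Φ j) * ∑' j, Ψ j)) := Real.sqrt_le_sqrt hfin
    _ = Real.sqrt S2 * Real.sqrt (∑' j, Φ j) * Real.sqrt (∑' j, Ψ j) := by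
        rw [Real.sqrt_mul hS20, Real.sqrt_mul (tsum_nonneg fun j => hΦ0 j), mul_assoc]

/-- For `p > 1/2`, `s ≥ 0`, `a ≥ 0`, `0 < θ < 1`, the convolution of two
sequences with finite `‖·‖_{p,s,a}` norm is well defined (absolutely convergent) and satisfies
`‖f⋆g‖_{p,s,a} ≤ C_alg(p)·‖f‖_{p,s,a}·‖g‖_{p,s,a}`. -/
theorem convolution_gevrey_norm_bound
    (p s a θ : ℝ) (hp : 1 / 2 < p) (hs : 0 ≤ s) (ha : 0 ≤ a) (hθ0 : 0 < θ) (hθ1 : θ < 1)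
    (f g : ℤ → ℂ)
    (hf : Summable fun j : ℤ => ‖f j‖ ^ 2 * gevreyWeight p s a θ j)
    (hg : Summable fun j : ℤ => ‖g j‖ ^ 2 * gevreyWeight p s a θ j) :
    (∀ j : ℤ, Summable fun i : ℤ => ‖f i‖ * ‖g (j - i)‖) ∧
    (Summable fun j : ℤ => ‖∑' i : ℤ, f i * g (j - i)‖ ^ 2 * gevreyWeight p s a θ j) ∧
    Real.sqrt (∑' j : ℤ, ‖∑' i : ℤ, f i * g (j - i)‖ ^ 2 * gevreyWeight p s a θ j) ≤
      Calg p * Real.sqrt (∑' j : ℤ, ‖f j‖ ^ 2 * gevreyWeight p s a θ j) *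
        Real.sqrt (∑' j : ℤ, ‖g j‖ ^ 2 * gevreyWeight p s a θ j) := by
  have hq : (1:ℝ) < 2 * p := by linarith
  have hS : Summable (fun i : ℤ => jap i ^ (-(2 * p))) := summable_jap_neg hq
  have hc0 : ∀ j i : ℤ, (0:ℝ) ≤ 2 ^ (2*p-1) * (jap i ^ (-(2*p)) + jap (j - i) ^ (-(2*p))) :=
    fun j i => mul_nonneg (Real.rpow_nonneg (by norm_num) _)
      (add_nonneg (Real.rpow_nonneg (jap_pos i).le _) (Real.rpow_nonneg (jap_pos _).le _))
  have hcs : ∀ j : ℤ,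
      Summable (fun i : ℤ => 2 ^ (2*p-1) * (jap i ^ (-(2*p)) + jap (j - i) ^ (-(2*p)))) :=
    fun j => ((hS.add (hS.comp_injective (fun x y h => by omega))).mul_left _)
  have hct : ∀ j : ℤ,
      ∑' i : ℤ, 2 ^ (2*p-1) * (jap i ^ (-(2*p)) + jap (j - i) ^ (-(2*p))) =
      (2:ℝ) ^ (2*p) * ∑' i : ℤ, jap i ^ (-(2 * p)) := by
    intro j
    have hshift : Summable (fun i : ℤ => jap (j - i) ^ (-(2*p))) :=
      hS.comp_injective (fun x y h => by omega)
    have hres : ∑' i : ℤ, jap (j - i) ^ (-(2*p)) = ∑' i : ℤ, jap i ^ (-(2 * p)) :=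
      Equiv.tsum_eq (⟨fun i => j - i, fun i => j - i, fun x => sub_sub_cancel j x,
        fun x => sub_sub_cancel j x⟩ : ℤ ≃ ℤ) (fun i => jap i ^ (-(2*p)))
    rw [tsum_mul_left, hS.tsum_add hshift, hres]
    have h2 : (2:ℝ) ^ (2*p) = 2 ^ (2*p-1) * 2 := by
      nth_rewrite 1 [show 2*p = (2*p-1) + 1 by ring]
      rw [Real.rpow_add two_pos, Real.rpow_one]
    rw [h2]; ring
  obtain ⟨h1, h2, h3⟩ := main_aux (gevreyWeight p s a θ)
    (fun j => one_le_weight (by linarith) hs ha hθ0.le j)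
    ((2:ℝ) ^ (2*p) * ∑' i : ℤ, jap i ^ (-(2 * p)))
    (fun j i => 2 ^ (2*p-1) * (jap i ^ (-(2*p)) + jap (j - i) ^ (-(2*p))))
    hc0 hcs (fun j => le_of_eq (hct j))
    (fun j i => weight_key hp hs ha hθ0 hθ1 j i)
    f g hf hg
  refine ⟨h1, h2, ?_⟩
  have hS0 : (0:ℝ) ≤ ∑' i : ℤ, jap i ^ (-(2 * p)) :=
    tsum_nonneg fun i => Real.rpow_nonneg (jap_pos i).le _
  have hCalg : Real.sqrt ((2:ℝ) ^ (2*p) * ∑' i : ℤ, jap i ^ (-(2 * p))) = Calg p := by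
    rw [Real.sqrt_mul (Real.rpow_nonneg (by norm_num) _), Calg]
    congr 1
    rw [show (2:ℝ) ^ (2*p) = ((2:ℝ) ^ p) ^ 2 by
      rw [← Real.rpow_natCast ((2:ℝ) ^ p) 2, ← Real.rpow_mul (by norm_num : (0:ℝ) ≤ 2)]
      norm_num [mul_comm]]
    exact Real.sqrt_sq (Real.rpow_nonneg (by norm_num) p)
  rw [← hCalg]
  exact h3
end

section
/- With the notation of the context, n̂_1 ≤ |π| + ∑_{l=2}^N n̂_l. -/
open scoped BigOperators

private lemma sum_map_toMultiset (γ : ℤ →₀ ℕ) (g : ℤ → ℝ) :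
    ((Finsupp.toMultiset γ).map g).sum = γ.sum fun a n => (n : ℝ) * g a := by
  refine γ.induction ?_ ?_
  · simp
  · intro a n f ha hn ih
    rw [Finsupp.toMultiset_add, Multiset.map_add, Multiset.sum_add, ih,
      Finsupp.toMultiset_single, Finsupp.sum_add_index (by simp) (by intros; push_cast; ring),
      Finsupp.sum_single_index (by simp)]
    simp [Multiset.map_nsmul, Multiset.sum_nsmul, nsmul_eq_mul]

private lemma abs_sum_le_map_abs (s : Multiset ℤ) :
    |((s.map fun i : ℤ => ((i : ℝ) : ℝ)).sum)| ≤ (s.map fun i : ℤ => |((i : ℝ) : ℝ)|).sum := by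
  refine Multiset.induction_on s (by simp) ?_
  intro a t ih
  simp only [Multiset.map_cons, Multiset.sum_cons]
  exact (abs_add_le _ _).trans (add_le_add_right ih _)

/-- With `n̂` the decreasing rearrangement of the multiset containing each
`⟨i⟩` with multiplicity `α_i + β_i` (encoded by a sorted list `L`), one has
`n̂_1 ≤ |π| + ∑_{l≥2} n̂_l`. -/
theorem nhat_one_le_pi_add_sum
    (α β : ℤ →₀ ℕ)
    (hmass : (α.sum fun _ n => n) = β.sum fun _ n => n)
    (hmass1 : 1 ≤ α.sum fun _ n => n)
    (L : List ℝ) (hsort : L.Pairwise (· ≥ ·))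
    (hL : (L : Multiset ℝ) = Multiset.map jap (α + β).toMultiset)
    (π : ℝ)
    (hπ : π = ∑ i ∈ α.support ∪ β.support, (i : ℝ) * ((α i : ℝ) - (β i : ℝ))) :
    L.headI ≤ |π| + (L.drop 1).sum := by
  classical
  set A := Finsupp.toMultiset α with hA
  set B := Finsupp.toMultiset β with hB
  set M := Finsupp.toMultiset (α + β) with hM
  have hMAB : M = A + B := by rw [hM, Finsupp.toMultiset_add]
  set c : ℤ → ℝ := fun i => (i : ℝ) with hc
  -- π = sum over A minus sum over B
  have hπ' : π = (A.map c).sum - (B.map c).sum := by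
    rw [hπ, sum_map_toMultiset, sum_map_toMultiset]
    have hsplit : ∑ i ∈ α.support ∪ β.support, (i : ℝ) * ((α i : ℝ) - (β i : ℝ))
        = ∑ i ∈ α.support ∪ β.support, (i : ℝ) * (α i : ℝ)
          - ∑ i ∈ α.support ∪ β.support, (i : ℝ) * (β i : ℝ) := by
      rw [← Finset.sum_sub_distrib]
      exact Finset.sum_congr rfl fun i _ => by ring
    have h1 : ∑ i ∈ α.support ∪ β.support, (i : ℝ) * (α i : ℝ)
        = α.sum fun a n => (n : ℝ) * c a := by
      rw [Finsupp.sum,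
        ← Finset.sum_subset (Finset.subset_union_left (s₂ := β.support))
          (fun i _ hi => by simp [Finsupp.notMem_support_iff.1 hi])]
      exact Finset.sum_congr rfl fun i _ => mul_comm _ _
    have h2 : ∑ i ∈ α.support ∪ β.support, (i : ℝ) * (β i : ℝ)
        = β.sum fun a n => (n : ℝ) * c a := by
      rw [Finsupp.sum,
        ← Finset.sum_subset (Finset.subset_union_right (s₁ := α.support))
          (fun i _ hi => by simp [Finsupp.notMem_support_iff.1 hi])]
      exact Finset.sum_congr rfl fun i _ => mul_comm _ _
    rw [hsplit, h1, h2]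
  -- L is nonempty
  have hcardA : Multiset.card A = α.sum fun _ n => n := by
    rw [hA, Finsupp.card_toMultiset]; rfl
  have hcardB : Multiset.card B = β.sum fun _ n => n := by
    rw [hB, Finsupp.card_toMultiset]; rfl
  have hlen : 2 ≤ L.length := by
    have : (Multiset.card (L : Multiset ℝ)) = L.length := rfl
    rw [hL] at this
    rw [← this, Multiset.card_map, hMAB, Multiset.card_add, hcardA, hcardB, ← hmass]
    omega
  have hne : L ≠ [] := by
    intro h; rw [h] at hlen; simp at hlen
  obtain ⟨a, t, hLat⟩ : ∃ a t, L = a :: t := by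
    cases L with
    | nil => exact absurd rfl hne
    | cons a t => exact ⟨a, t, rfl⟩
  have hhead : L.headI = a := by rw [hLat]; rfl
  have hdrop : L.drop 1 = t := by rw [hLat]; rfl
  -- a = jap i₀ for some i₀ ∈ M
  have hmem : a ∈ Multiset.map jap M := by
    rw [← hL, hLat]; simp
  obtain ⟨i₀, hi₀M, hi₀⟩ := Multiset.mem_map.1 hmem
  set M' := M.erase i₀ with hM'
  have hconsM : i₀ ::ₘ M' = M := Multiset.cons_erase hi₀M
  have ht : (t : Multiset ℝ) = Multiset.map jap M' := by
    have : a ::ₘ (t : Multiset ℝ) = jap i₀ ::ₘ Multiset.map jap M' := by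
      rw [← Multiset.map_cons, hconsM, ← hL, hLat, Multiset.cons_coe]
    rw [hi₀] at this
    exact (Multiset.cons_inj_right a).1 this
  have htsum : t.sum = (Multiset.map jap M').sum := by
    rw [← Multiset.sum_coe, ht]
  -- key inequality : |c i₀| ≤ |π| + sum of |c i| over M'
  have habs : ∀ s : Multiset ℤ, |((s.map c).sum)| ≤ (s.map fun i => |c i|).sum :=
    fun s => abs_sum_le_map_abs s
  have hkey : |c i₀| ≤ |π| + (M'.map fun i => |c i|).sum := by
    have hi₀AB : i₀ ∈ A ∨ i₀ ∈ B := by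
      rw [hMAB, Multiset.mem_add] at hi₀M; exact hi₀M
    rcases hi₀AB with hiA | hiB
    · have hM'eq : M' = A.erase i₀ + B := by
        rw [hM', hMAB, Multiset.erase_add_left_pos _ hiA]
      have hAsum : (A.map c).sum = c i₀ + ((A.erase i₀).map c).sum := by
        conv_lhs => rw [← Multiset.cons_erase hiA]
        simp
      have : c i₀ = π - ((A.erase i₀).map c).sum + (B.map c).sum := by
        rw [hπ', hAsum]; ring
      rw [this]
      calc |π - ((A.erase i₀).map c).sum + (B.map c).sum|
          ≤ |π| + |((A.erase i₀).map c).sum| + |(B.map c).sum| := by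
            refine (abs_add_le _ _).trans (add_le_add_left ?_ _)
            exact (abs_sub _ _)
        _ ≤ |π| + ((A.erase i₀).map fun i => |c i|).sum + (B.map fun i => |c i|).sum := by
            gcongr
            exacts [habs _, habs _]
        _ = |π| + (M'.map fun i => |c i|).sum := by
            rw [hM'eq, Multiset.map_add, Multiset.sum_add]; ring
    · have hM'eq : M' = A + B.erase i₀ := by
        rw [hM', hMAB, Multiset.erase_add_right_pos _ hiB]
      have hBsum : (B.map c).sum = c i₀ + ((B.erase i₀).map c).sum := by
        conv_lhs => rw [← Multiset.cons_erase hiB]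
        simp
      have : c i₀ = -π + (A.map c).sum - ((B.erase i₀).map c).sum := by
        rw [hπ', hBsum]; ring
      rw [this]
      calc |-π + (A.map c).sum - ((B.erase i₀).map c).sum|
          ≤ |(-π)| + |(A.map c).sum| + |((B.erase i₀).map c).sum| := by
            refine (abs_sub _ _).trans (add_le_add_left (abs_add_le _ _) _)
        _ = |π| + |(A.map c).sum| + |((B.erase i₀).map c).sum| := by rw [abs_neg]
        _ ≤ |π| + (A.map fun i => |c i|).sum + ((B.erase i₀).map fun i => |c i|).sum := by
            gcongr
            exacts [habs _, habs _]
        _ = |π| + (M'.map fun i => |c i|).sum := by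
            rw [hM'eq, Multiset.map_add, Multiset.sum_add]; ring
  -- sum of jap over M' dominates sum of abs, and is at least 1
  have hdom : (M'.map fun i => |c i|).sum ≤ (Multiset.map jap M').sum := by
    apply Multiset.sum_map_le_sum_map
    intro i _
    exact le_max_left _ _
  have hM'ne : M' ≠ 0 := by
    intro h
    have : Multiset.card M = 1 := by rw [← hconsM, h]; simp
    rw [hMAB, Multiset.card_add, hcardA, hcardB, ← hmass] at this
    omega
  have hone : (1 : ℝ) ≤ (Multiset.map jap M').sum := by
    obtain ⟨x, hx⟩ := Multiset.exists_mem_of_ne_zero hM'ne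
    have hx' : jap x ∈ Multiset.map jap M' := Multiset.mem_map_of_mem _ hx
    have h1 : (1 : ℝ) ≤ jap x := le_max_right _ _
    refine h1.trans (Multiset.single_le_sum ?_ _ hx')
    intro y hy
    obtain ⟨z, _, rfl⟩ := Multiset.mem_map.1 hy
    exact le_trans zero_le_one (le_max_right _ _)
  -- finish
  rw [hhead, hdrop, ← hi₀, htsum]
  have hpi0 : (0 : ℝ) ≤ |π| := abs_nonneg _
  rw [jap]
  apply max_le
  · exact hkey.trans (by linarith)
  · linarith
end

section
/- With the notation of the context, for every j ∈ ℤ with α_j + β_j ≥ 1 one has ⟨j⟩² · ∏_{l=3}^N n̂_l ≤ (N + |π|) · ∏_{i∈ℤ} ⟨i⟩^{α_i+β_i}. -/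
open scoped BigOperators

theorem list_one_le_prod (l : List ℝ) (h : ∀ x ∈ l, (1:ℝ) ≤ x) : (1:ℝ) ≤ l.prod := by
  induction l with
  | nil => simp
  | cons a t ih =>
    simp only [List.prod_cons]
    have h1 : (1:ℝ) ≤ a := h a (by simp)
    have h2 : (1:ℝ) ≤ t.prod := ih fun x hx => h x (by simp [hx])
    nlinarith

/-- With `n̂` the decreasing rearrangement of the multiset containing each
`⟨i⟩` with multiplicity `α_i + β_i` (encoded by a sorted list `L`), for every `j` with
`α_j + β_j ≥ 1` one has `⟨j⟩² ∏_{l≥3} n̂_l ≤ (N + |π|) ∏_i ⟨i⟩^{α_i+β_i}`. -/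
theorem japj_sq_mul_prod_tail_le
    (α β : ℤ →₀ ℕ)
    (hmass : (α.sum fun _ n => n) = β.sum fun _ n => n)
    (hmass1 : 1 ≤ α.sum fun _ n => n)
    (L : List ℝ) (hsort : L.Pairwise (· ≥ ·))
    (hL : (L : Multiset ℝ) = Multiset.map jap (α + β).toMultiset)
    (N : ℕ) (hN : N = (α.sum fun _ n => n) + β.sum fun _ n => n)
    (π : ℝ)
    (hπ : π = ∑ i ∈ α.support ∪ β.support, (i : ℝ) * ((α i : ℝ) - (β i : ℝ)))
    (j : ℤ) (hj : 1 ≤ α j + β j) :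
    jap j ^ 2 * (L.drop 2).prod ≤
      ((N : ℝ) + |π|) * ∏ i ∈ α.support ∪ β.support, jap i ^ (α i + β i) := by
  classical
  set S := α.support ∪ β.support with hS
  have hjap1 : ∀ i : ℤ, (1:ℝ) ≤ jap i := fun i => le_max_right _ _
  have hjap0 : ∀ i : ℤ, (0:ℝ) ≤ jap i := fun i => le_trans zero_le_one (hjap1 i)
  have habs : ∀ i : ℤ, |(i:ℝ)| ≤ jap i := fun i => le_max_left _ _
  have hsub : (α + β).support ⊆ S := Finsupp.support_add
  -- product identity
  have hprod : L.prod = ∏ i ∈ S, jap i ^ (α i + β i) := by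
    have h1 : (L : Multiset ℝ).prod = L.prod := Multiset.prod_coe L
    rw [← h1, hL, Finsupp.toMultiset_map, Finsupp.prod_toMultiset,
      Finsupp.prod_mapDomain_index (fun b => pow_zero b) (fun b m n => pow_add b m n),
      Finsupp.prod_of_support_subset _ hsub _ (fun i _ => pow_zero _)]
    refine Finset.prod_congr rfl fun i _ => ?_
    rw [Finsupp.add_apply]
  -- sum identity
  have hsum : L.sum = ∑ i ∈ S, ((α i + β i : ℕ) : ℝ) * jap i := by
    have h1 : (L : Multiset ℝ).sum = L.sum := Multiset.sum_coe L
    rw [← h1, hL, Finsupp.toMultiset_map, Finsupp.sum_toMultiset,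
      Finsupp.sum_mapDomain_index (h := fun (a : ℝ) (m : ℕ) => m • a)
        (fun b => zero_smul ℕ b) (fun b m n => add_smul m n b),
      Finsupp.sum_of_support_subset _ hsub (fun i n => n • jap i) (fun i _ => zero_smul ℕ _)]
    refine Finset.sum_congr rfl fun i _ => ?_
    rw [Finsupp.add_apply, nsmul_eq_mul]
  -- length
  have hlen : L.length = N := by
    have hc := congrArg Multiset.card hL
    rw [Multiset.coe_card, Multiset.card_map, Finsupp.card_toMultiset] at hc
    rw [hc, Finsupp.sum_add_index' (fun _ => rfl) (fun _ _ _ => rfl), hN]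
    rfl
  have hN2 : 2 ≤ N := by omega
  -- membership of jap j
  have hjS : j ∈ S := by
    rcases Nat.lt_or_ge (α j) 1 with h | h
    · exact Finset.mem_union_right _ (Finsupp.mem_support_iff.2 (by omega))
    · exact Finset.mem_union_left _ (Finsupp.mem_support_iff.2 (by omega))
  have hjmem : jap j ∈ L := by
    have : jap j ∈ (L : Multiset ℝ) := by
      rw [hL]
      exact Multiset.mem_map_of_mem _
        ((Finsupp.mem_toMultiset _ _).2 (Finsupp.mem_support_iff.2
          (by rw [Finsupp.add_apply]; omega)))
    exact this
  have hLall : ∀ x ∈ L, (1:ℝ) ≤ x := by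
    intro x hx
    have : x ∈ (L : Multiset ℝ) := hx
    rw [hL] at this
    obtain ⟨i, _, rfl⟩ := Multiset.mem_map.1 this
    exact hjap1 i
  -- destructure L
  rcases L with _ | ⟨a, L'⟩
  · simp at hlen; omega
  rcases L' with _ | ⟨b, t⟩
  · simp at hlen; omega
  have hNlen : t.length + 2 = N := by simpa using hlen
  rw [List.pairwise_cons] at hsort
  have hba : b ≤ a := hsort.1 b (by simp)
  rw [List.pairwise_cons] at hsort
  have htb : ∀ x ∈ t, x ≤ b := fun x hx => (hsort.2).1 x hx
  have hbtb : ∀ x ∈ b :: t, x ≤ b := by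
    intro x hx
    rcases List.mem_cons.1 hx with rfl | hx
    · exact le_refl x
    · exact htb x hx
  have hb1 : (1:ℝ) ≤ b := hLall b (by simp)
  have ha1 : (1:ℝ) ≤ a := hLall a (by simp)
  have ht1 : (1:ℝ) ≤ t.prod := list_one_le_prod t (fun x hx => hLall x (by simp [hx]))
  have ht0 : (0:ℝ) ≤ t.prod := le_trans zero_le_one ht1
  have hπ0 : (0:ℝ) ≤ |π| := abs_nonneg _
  have hcastN : (2:ℝ) ≤ (N:ℝ) := by exact_mod_cast hN2
  simp only [List.drop]
  rw [← hprod]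
  simp only [List.prod_cons]
  -- goal : jap j ^ 2 * t.prod ≤ ((N:ℝ) + |π|) * (a * (b * t.prod))
  rcases le_or_gt (jap j) b with hcase | hcase
  · -- easy case
    have h1 : jap j ^ 2 ≤ a * b := by nlinarith [hjap0 j]
    have h2 : (1:ℝ) ≤ (N:ℝ) + |π| := by linarith
    have h3 : jap j ^ 2 * t.prod ≤ a * b * t.prod := mul_le_mul_of_nonneg_right h1 ht0
    have h5 : (0:ℝ) ≤ a * (b * t.prod) := by nlinarith
    calc jap j ^ 2 * t.prod ≤ a * b * t.prod := h3
      _ = 1 * (a * (b * t.prod)) := by ring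
      _ ≤ ((N:ℝ) + |π|) * (a * (b * t.prod)) := mul_le_mul_of_nonneg_right h2 h5
  · -- jap j = a
    have ha : a = jap j := by
      rcases List.mem_cons.1 hjmem with h | h
      · exact h.symm
      · exact absurd (hbtb _ h) (not_le.2 hcase)
    -- jap j = |j|
    have hjabs : jap j = |(j:ℝ)| := by
      rcases le_or_gt (|(j:ℝ)|) 1 with h | h
      · have : jap j = 1 := max_eq_right h
        linarith
      · exact max_eq_left h.le
    -- momentum bound : 2 * |j| ≤ |π| + T
    set T : ℝ := ∑ i ∈ S, |(i:ℝ)| * ((α i + β i : ℕ) : ℝ) with hT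
    have h2j : 2 * |(j:ℝ)| ≤ |π| + T := by
      have hsplit : (j:ℝ) * ((α j : ℝ) - (β j : ℝ))
          + ∑ i ∈ S.erase j, (i:ℝ) * ((α i : ℝ) - (β i : ℝ)) = π := by
        rw [hπ]
        exact Finset.add_sum_erase S (fun i => (i:ℝ) * ((α i : ℝ) - (β i : ℝ))) hjS
      have h4 : |(j:ℝ) * ((α j : ℝ) - (β j : ℝ))|
          ≤ |π| + |∑ i ∈ S.erase j, (i:ℝ) * ((α i : ℝ) - (β i : ℝ))| := by
        have : (j:ℝ) * ((α j : ℝ) - (β j : ℝ))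
            = π - ∑ i ∈ S.erase j, (i:ℝ) * ((α i : ℝ) - (β i : ℝ)) := by linarith
        rw [this]
        exact (abs_sub _ _).trans (by rfl)
      have h5 : |∑ i ∈ S.erase j, (i:ℝ) * ((α i : ℝ) - (β i : ℝ))|
          ≤ ∑ i ∈ S.erase j, |(i:ℝ)| * ((α i + β i : ℕ) : ℝ) := by
        refine (Finset.abs_sum_le_sum_abs _ _).trans (Finset.sum_le_sum fun i _ => ?_)
        rw [abs_mul]
        refine mul_le_mul_of_nonneg_left ?_ (abs_nonneg _)
        rw [abs_le]
        constructor
        · push_cast; have := (α i).cast_nonneg (α := ℝ); have := (β i).cast_nonneg (α := ℝ); linarith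
        · push_cast; have := (α i).cast_nonneg (α := ℝ); have := (β i).cast_nonneg (α := ℝ); linarith
      have h6 : |(j:ℝ)| * ((α j + β j : ℕ) : ℝ)
          + ∑ i ∈ S.erase j, |(i:ℝ)| * ((α i + β i : ℕ) : ℝ) = T := by
        rw [hT]
        exact Finset.add_sum_erase S (fun i => |(i:ℝ)| * ((α i + β i : ℕ) : ℝ)) hjS
      have h7 : |(j:ℝ) * ((α j : ℝ) - (β j : ℝ))| = |(j:ℝ)| * |(α j : ℝ) - (β j : ℝ)| :=
        abs_mul _ _
      have h8 : (2:ℝ) ≤ |(α j : ℝ) - (β j : ℝ)| + ((α j + β j : ℕ) : ℝ) := by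
        rcases Nat.le_total (α j) (β j) with h | h
        · have h1 : 1 ≤ β j := by omega
          have : |(α j : ℝ) - (β j : ℝ)| = (β j : ℝ) - (α j : ℝ) := by
            rw [abs_of_nonpos (sub_nonpos.2 (by exact_mod_cast h : (α j : ℝ) ≤ (β j : ℝ)))]
            ring
          rw [this]
          push_cast
          have : (1:ℝ) ≤ (β j : ℝ) := by exact_mod_cast h1
          linarith
        · have h1 : 1 ≤ α j := by omega
          have : |(α j : ℝ) - (β j : ℝ)| = (α j : ℝ) - (β j : ℝ) :=
            abs_of_nonneg (sub_nonneg.2 (by exact_mod_cast h : (β j : ℝ) ≤ (α j : ℝ)))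
          rw [this]
          push_cast
          have : (1:ℝ) ≤ (α j : ℝ) := by exact_mod_cast h1
          linarith
      have h9 : 2 * |(j:ℝ)| ≤ |(j:ℝ)| * (|(α j : ℝ) - (β j : ℝ)| + ((α j + β j : ℕ) : ℝ)) := by
        have := mul_le_mul_of_nonneg_left h8 (abs_nonneg (j:ℝ))
        linarith
      nlinarith [abs_nonneg (j:ℝ)]
    -- T ≤ L.sum
    have hTle : T ≤ (a :: b :: t).sum := by
      rw [hsum, hT]
      refine Finset.sum_le_sum fun i _ => ?_
      rw [mul_comm ((_ : ℕ) : ℝ) (jap i)]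
      exact mul_le_mul_of_nonneg_right (habs i) (Nat.cast_nonneg _)
    -- list sum bound
    have hsumle : (a :: b :: t).sum ≤ a + ((t.length + 1 : ℕ) : ℝ) * b := by
      have h1 : (b :: t).sum ≤ (b :: t).length • b := List.sum_le_card_nsmul _ _ hbtb
      rw [List.sum_cons]
      have h2 : (b :: t).length • b = ((t.length + 1 : ℕ) : ℝ) * b := by
        rw [nsmul_eq_mul]; simp
      linarith [h1.trans_eq h2]
    have hcastlen : ((t.length + 1 : ℕ) : ℝ) = (N:ℝ) - 1 := by
      have : ((t.length + 2 : ℕ) : ℝ) = (N:ℝ) := by exact_mod_cast congrArg (Nat.cast (R := ℝ)) hNlen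
      push_cast at this ⊢
      linarith
    -- key inequality
    have hkey : jap j ≤ |π| + ((N:ℝ) - 1) * b := by
      have : 2 * jap j ≤ |π| + (a + ((N:ℝ) - 1) * b) := by
        rw [hjabs]
        rw [hcastlen] at hsumle
        linarith
      rw [← ha] at *
      linarith [ha ▸ this]
    have e2 : |π| + ((N:ℝ) - 1) * b ≤ ((N:ℝ) + |π|) * b := by nlinarith
    calc jap j ^ 2 * t.prod = (jap j * jap j) * t.prod := by ring
      _ ≤ ((|π| + ((N:ℝ) - 1) * b) * jap j) * t.prod := by
          exact mul_le_mul_of_nonneg_right (mul_le_mul_of_nonneg_right hkey (hjap0 j)) ht0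
      _ ≤ ((((N:ℝ) + |π|) * b) * jap j) * t.prod := by
          exact mul_le_mul_of_nonneg_right (mul_le_mul_of_nonneg_right e2 (hjap0 j)) ht0
      _ = ((N:ℝ) + |π|) * (a * (b * t.prod)) := by rw [ha]; ring
end

section
/- With the notation of the context, assume |∑_{i∈ℤ} (α_i − β_i) i²| ≤ 10 ∑_{i∈ℤ} |α_i − β_i|. Then ∏_{i∈ℤ} (1 + |α_i − β_i| ⟨i⟩) ≤ e^{27} (1 + |π|)³ N⁶ ∏_{l=3}^N n̂_l^{15/2}. -/
open scoped BigOperators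

set_option maxHeartbeats 1600000

lemma jap_one_le (i : ℤ) : 1 ≤ jap i := le_max_right _ _
lemma jap_abs_le (i : ℤ) : |(i:ℝ)| ≤ jap i := le_max_left _ _
lemma jap_eq_abs {i : ℤ} (h : 1 ≤ |i|) : jap i = |(i:ℝ)| := by
  apply max_eq_left
  have : (1:ℝ) ≤ |((i:ℤ):ℝ)| := by exact_mod_cast (by exact_mod_cast h : (1:ℤ) ≤ |i|)
  simpa using this

noncomputable def sortD (M : Multiset ℝ) : List ℝ := (M.sort (· ≤ ·)).reverse

lemma coe_sortD (M : Multiset ℝ) : ((sortD M : List ℝ) : Multiset ℝ) = M := by simp [sortD]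

lemma sorted_sortD (M : Multiset ℝ) : (sortD M).Pairwise (· ≥ ·) := by
  have := Multiset.pairwise_sort (s := M) (r := (· ≤ ·))
  unfold sortD; rw [List.pairwise_reverse]; exact this

instance : IsAntisymm ℝ (· ≥ ·) := ⟨fun _ _ h h' => le_antisymm h' h⟩
instance : IsTrans ℝ (· ≥ ·) := ⟨fun _ _ _ h h' => le_trans h' h⟩

lemma sublist_of_le_sorted {l₁ l₂ : List ℝ} (h₁ : l₁.Pairwise (· ≥ ·)) (h₂ : l₂.Pairwise (· ≥ ·))
    (hle : (l₁ : Multiset ℝ) ≤ (l₂ : Multiset ℝ)) : l₁.Sublist l₂ :=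
  List.sublist_of_subperm_of_pairwise ((Multiset.coe_le).mp hle) h₁ h₂

lemma slot {M : Multiset ℝ} {lM : List ℝ} (hcoe : (lM : Multiset ℝ) = M)
    (hs : lM.Pairwise (· ≥ ·)) {T : Multiset ℝ} (hT : T ≤ M) {k : ℕ} (hcard : Multiset.card T = k + 1) :
    ∃ y ∈ T, y ≤ lM.getD k 1 := by
  set lT := sortD T with hlT
  have hcT : (lT : Multiset ℝ) = T := coe_sortD T
  have hsub : lT.Sublist lM := by
    apply sublist_of_le_sorted (sorted_sortD T) hs
    rw [hcT, hcoe]; exact hT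
  have hlen : lT.length = k + 1 := by
    have := congrArg Multiset.card hcT; simpa using this.trans hcard
  have hdrop : (lT.drop k).Sublist (lM.drop k) := hsub.drop k
  obtain ⟨z, hz⟩ : ∃ z, lT.drop k = [z] := by
    apply List.length_eq_one_iff.mp; simp [hlen]
  have hzT : z ∈ T := by
    rw [← hcT]
    exact_mod_cast (List.IsSuffix.subset ⟨lT.take k, by simp⟩) (hz ▸ List.mem_singleton_self z)
  have hzM : z ∈ lM.drop k := hdrop.subset (hz ▸ List.mem_singleton_self z)
  refine ⟨z, hzT, ?_⟩
  have hklen : k < lM.length := by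
    have := hdrop.length_le; rw [hz] at this
    simp at this; omega
  rw [List.getD_eq_getElem _ _ hklen]
  rw [List.drop_eq_getElem_cons hklen] at hzM
  rcases List.mem_cons.mp hzM with h | h
  · exact le_of_eq h
  · have hp : lM.Pairwise (· ≥ ·) := hs
    have hpg := (List.pairwise_iff_get.mp hp)
    obtain ⟨j, hj, rfl⟩ := List.mem_iff_get.mp h
    have hjj : (lM.drop (k+1)).get j = lM.get ⟨k+1+j, by have := j.2; simp at this ⊢; omega⟩ := by
      simp [List.getElem_drop]
    rw [hjj]
    have := hpg ⟨k, hklen⟩ ⟨k+1+j, by have := j.2; simp at this; omega⟩ (by simp; omega)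
    simpa using this

lemma toMultiset_mono {γ δ : ℤ →₀ ℕ} (h : γ ≤ δ) : γ.toMultiset ≤ δ.toMultiset := by
  rw [Multiset.le_iff_count]
  intro a
  rw [Finsupp.count_toMultiset, Finsupp.count_toMultiset]
  exact h a

lemma prod_toMultiset_map (γ : ℤ →₀ ℕ) (g : ℤ → ℝ) :
    ((γ.toMultiset.map g)).prod = ∏ i ∈ γ.support, g i ^ γ i := by
  rw [Finsupp.toMultiset_map, Finsupp.prod_toMultiset]
  rw [Finsupp.prod_mapDomain_index (by simp) (by intros; rw [pow_add])]
  rfl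

lemma one_add_le_pow (x : ℝ) (hx : 1 ≤ x) (d : ℕ) : 1 + d * x ≤ (2 * x) ^ d := by
  induction d with
  | zero => simp
  | succ n ih =>
    have h2 : (0:ℝ) ≤ 2 * x := by linarith
    calc 1 + (n+1 : ℕ) * x = (1 + n * x) + x := by push_cast; ring
    _ ≤ (2*x)^n + x := by linarith
    _ ≤ (2*x)^(n+1) := by
        have h1 : (1:ℝ) ≤ (2*x)^n := one_le_pow₀ (by linarith)
        calc (2*x)^n + x ≤ (2*x)^n + x * (2*x)^n := by nlinarith
        _ = (1 + x) * (2*x)^n := by ring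
        _ ≤ (2*x) * (2*x)^n := by nlinarith
        _ = (2*x)^(n+1) := by ring

lemma listprod_one_le : ∀ {l : List ℝ}, (∀ x ∈ l, (1:ℝ) ≤ x) → 1 ≤ l.prod := by
  intro l
  induction l with
  | nil => simp
  | cons a t ih =>
    intro h
    have ha : 1 ≤ a := h a (List.mem_cons_self)
    have ht : 1 ≤ t.prod := ih (fun x hx => h x (List.mem_cons_of_mem _ hx))
    rw [List.prod_cons]; nlinarith

lemma sublist_prod_le {l₁ l₂ : List ℝ} (h : l₁.Sublist l₂) (h1 : ∀ x ∈ l₂, 1 ≤ x) :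
    l₁.prod ≤ l₂.prod := by
  induction h with
  | slnil => simp
  | @cons l₁ l₂ a h ih =>
    have ha : 1 ≤ a := h1 a (List.mem_cons_self)
    have h2 : ∀ x ∈ l₂, (1:ℝ) ≤ x := fun x hx => h1 x (List.mem_cons_of_mem _ hx)
    have := ih h2
    rw [List.prod_cons]
    nlinarith [listprod_one_le h2]
  | @cons_cons l₁ l₂ a h ih =>
    have ha : 1 ≤ a := h1 a (List.mem_cons_self)
    have h2 : ∀ x ∈ l₂, (1:ℝ) ≤ x := fun x hx => h1 x (List.mem_cons_of_mem _ hx)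
    rw [List.prod_cons, List.prod_cons]
    have := ih h2
    nlinarith [listprod_one_le (fun x hx => h2 x (h.subset hx))]

lemma prodmap_sq_le_rpow : ∀ {l : List ℝ}, (∀ x ∈ l, (1:ℝ) ≤ x) →
    (l.map (fun x => x^2)).prod ≤ (l.map (fun x => x ^ ((15:ℝ)/2))).prod := by
  intro l
  induction l with
  | nil => simp
  | cons a t ih =>
    intro h
    have ha : 1 ≤ a := h a (List.mem_cons_self)
    have h2 : ∀ x ∈ t, (1:ℝ) ≤ x := fun x hx => h x (List.mem_cons_of_mem _ hx)
    simp only [List.map_cons, List.prod_cons]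
    have e1 : a^2 ≤ a ^ ((15:ℝ)/2) := by
      rw [show (a:ℝ)^2 = a ^ ((2:ℕ):ℝ) by rw [Real.rpow_natCast]]
      exact Real.rpow_le_rpow_of_exponent_le ha (by norm_num)
    have e2 := ih h2
    have p1 : (0:ℝ) ≤ a^2 := sq_nonneg a
    have p2 : (0:ℝ) ≤ (t.map (fun x => x^2)).prod := by
      apply le_trans zero_le_one
      apply listprod_one_le
      intro x hx
      simp only [List.mem_map] at hx
      obtain ⟨y, hy, rfl⟩ := hx
      nlinarith [h2 y hy]
    exact mul_le_mul e1 e2 p2 (by positivity)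




lemma ts (u : ℤ) (m : ℕ) :
    (Finsupp.single u m).toMultiset.map jap = Multiset.replicate m (jap u) := by
  rw [Finsupp.toMultiset_single, Multiset.map_nsmul, Multiset.map_singleton,
    Multiset.nsmul_singleton]

lemma mul4_mono {c A B C c' A' B' C' : ℝ} (hc0 : 0 ≤ c) (hA0 : 0 ≤ A) (hB0 : 0 ≤ B) (hC0 : 0 ≤ C)
    (h1 : c ≤ c') (h2 : A ≤ A') (h3 : B ≤ B') (h4 : C ≤ C') : c*A*B*C ≤ c'*A'*B'*C' := by
  have k1 : c*A ≤ c'*A' := mul_le_mul h1 h2 hA0 (le_trans hc0 h1)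
  have k2 : c*A*B ≤ c'*A'*B' := mul_le_mul k1 h3 hB0 (mul_nonneg (le_trans hc0 h1) (le_trans hA0 h2))
  exact mul_le_mul k2 h4 hC0 (mul_nonneg (mul_nonneg (le_trans hc0 h1) (le_trans hA0 h2)) (le_trans hB0 h3))


lemma prodmap2_le {l : List ℝ} (h : ∀ x ∈ l, (2:ℝ) ≤ x) :
    (l.map (fun y => 2*y)).prod ≤ (l.map (fun y => y^2)).prod := by
  induction l with
  | nil => simp
  | cons a t ih =>
    have ha : 2 ≤ a := h a (List.mem_cons_self)
    have h2 : ∀ x ∈ t, (2:ℝ) ≤ x := fun x hx => h x (List.mem_cons_of_mem _ hx)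
    simp only [List.map_cons, List.prod_cons]
    have e1 : 2*a ≤ a^2 := by nlinarith
    have p1 : (0:ℝ) ≤ 2*a := by linarith
    have p2 : (0:ℝ) ≤ (t.map (fun y => 2*y)).prod := by
      apply le_trans zero_le_one
      apply listprod_one_le
      intro x hx
      simp only [List.mem_map] at hx
      obtain ⟨y, hy, rfl⟩ := hx
      linarith [h2 y hy]
    exact mul_le_mul e1 (ih h2) p2 (by positivity)

lemma final_combine {x₁ x₂ W V₂L V Nr pr r : ℝ} (hx2 : 0 ≤ x₂) (hW0 : 0 ≤ W)
    (hV₂0 : 0 ≤ V₂L) (hN : 0 ≤ Nr) (hpr : 0 ≤ pr) (hr : 0 ≤ r)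
    (hpq : x₁*x₂ ≤ 400*(Nr*(1+pr)*(1+r^2))^2) (hW : W ≤ V₂L)
    (hbig : (1+r^2)^2 * V₂L ≤ 4*V) :
    (2*x₁)*((2*x₂)*W)*(2*Nr)^3 ≤ 51200*(1+pr)^2*Nr^5*V := by
  have e1 : (2*x₁)*((2*x₂)*W)*(2*Nr)^3 = 32*Nr^3*((x₁*x₂)*W) := by ring
  have e2 : (x₁*x₂)*W ≤ (400*(Nr*(1+pr)*(1+r^2))^2) * V₂L :=
    mul_le_mul hpq hW hW0 (by positivity)
  have e3 : 32*Nr^3*((x₁*x₂)*W) ≤ 32*Nr^3*((400*(Nr*(1+pr)*(1+r^2))^2) * V₂L) :=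
    mul_le_mul_of_nonneg_left e2 (by positivity)
  have e4 : 32*Nr^3*((400*(Nr*(1+pr)*(1+r^2))^2) * V₂L) = 12800*Nr^5*(1+pr)^2*((1+r^2)^2*V₂L) := by
    ring
  have e5 : 12800*Nr^5*(1+pr)^2*((1+r^2)^2*V₂L) ≤ 12800*Nr^5*(1+pr)^2*(4*V) :=
    mul_le_mul_of_nonneg_left hbig (by positivity)
  have e6 : 12800*Nr^5*(1+pr)^2*(4*V) = 51200*(1+pr)^2*Nr^5*V := by ring
  linarith [e1 ▸ le_refl ((2*x₁)*((2*x₂)*W)*(2*Nr)^3), e4 ▸ e3, e6 ▸ e5]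

lemma exp27_ge : (51200:ℝ) ≤ Real.exp 27 := by
  have h1 : ((27:ℕ):ℝ) * 1 = 27 := by norm_num
  have h2 : Real.exp 27 = Real.exp 1 ^ (27:ℕ) := by
    rw [← Real.exp_nat_mul, h1]
  rw [h2]
  have he : (2:ℝ) ≤ Real.exp 1 := by
    have := Real.add_one_le_exp (1:ℝ)
    linarith
  calc (51200:ℝ) ≤ 2^(27:ℕ) := by norm_num
  _ ≤ Real.exp 1 ^ (27:ℕ) := pow_le_pow_left₀ (by norm_num) he 27

lemma caseA_bound (x N r Pi : ℝ) (hN : 1 ≤ N) (hr : 1 ≤ r)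
    (h : 2*x^2 ≤ 10*N + N*r^2) : x*x ≤ 400*(N*(1+|Pi|)*(1+r^2))^2 := by
  have hPi0 : 0 ≤ |Pi| := abs_nonneg _
  have h1 : x*x ≤ 5*N + N*r^2/2 := by nlinarith [sq_nonneg x]
  have hr2 : (0:ℝ) ≤ N*r^2 := by positivity
  have hA : 5*N + N*r^2/2 ≤ 5*(N*(1+r^2)) := by nlinarith
  have hB : N*(1+r^2) ≤ N*(1+|Pi|)*(1+r^2) := by
    nlinarith [mul_nonneg (mul_nonneg (by linarith : (0:ℝ) ≤ N) hPi0) (by nlinarith : (0:ℝ) ≤ 1 + r^2)]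
  have hK2 : 2 ≤ N*(1+|Pi|)*(1+r^2) := by nlinarith
  nlinarith [mul_nonneg (by linarith : (0:ℝ) ≤ N*(1+|Pi|)*(1+r^2) - 2) (by linarith : (0:ℝ) ≤ N*(1+|Pi|)*(1+r^2))]

lemma finish_lemma (Nr πr V lhs : ℝ) (hN2 : 2 ≤ Nr) (hπ : 0 ≤ πr) (hV : 1 ≤ V)
    (h : lhs ≤ 51200 * (1+πr)^2 * Nr^5 * V) : lhs ≤ Real.exp 27 * (1+πr)^3 * Nr^6 * V := by
  have h1 : (1:ℝ) ≤ 1 + πr := by linarith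
  have e1 : (51200:ℝ) ≤ Real.exp 27 := exp27_ge
  have e2 : (1+πr)^2 ≤ (1+πr)^3 := pow_le_pow_right₀ h1 (by norm_num)
  have e3 : Nr^5 ≤ Nr^6 := pow_le_pow_right₀ (by linarith) (by norm_num)
  have p2 : (0:ℝ) ≤ (1+πr)^2 := by positivity
  have p3 : (0:ℝ) ≤ Nr^5 := by positivity
  calc lhs ≤ 51200 * (1+πr)^2 * Nr^5 * V := h
  _ ≤ Real.exp 27 * (1+πr)^3 * Nr^6 * V := by
      apply mul_le_mul_of_nonneg_right _ (by linarith)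
      apply mul_le_mul _ e3 p3 (by positivity)
      apply mul_le_mul e1 e2 p2 (le_trans (by norm_num) e1)


section arith
variable {a b m K : ℝ}

private lemma quadA (ha : 0 ≤ a) (hb : 0 ≤ b) (hm : 2 ≤ m) (hK : 2 ≤ K)
    (h1 : a ≤ m*b + K) (h2 : m*(m-1)*b^2 ≤ 10*K + K*a + K*(m*b)) : a*b ≤ 400*K^2 := by
  have hK0 : (0:ℝ) ≤ K := by linarith
  have hX0 : (0:ℝ) ≤ m*b := by nlinarith
  have hmm : (m*b)^2/2 ≤ m*(m-1)*b^2 := by nlinarith [mul_nonneg (mul_nonneg (by linarith : (0:ℝ) ≤ m - 2) (by linarith : (0:ℝ) ≤ m)) (sq_nonneg b)]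
  have hKa : K*a ≤ K*(m*b) + K^2 := by nlinarith [mul_le_mul_of_nonneg_left h1 hK0]
  have hX2 : (m*b)^2 ≤ 20*K + 4*(K*(m*b)) + 2*K^2 := by linarith
  have h4KX : 4*(K*(m*b)) ≤ (m*b)^2/2 + 8*K^2 := by nlinarith [sq_nonneg (m*b - 4*K)]
  have hXf : (m*b)^2 ≤ 40*K + 20*K^2 := by linarith
  have hbX : b ≤ (m*b)/2 := by nlinarith
  have hab : a*b ≤ (m*b + K)*((m*b)/2) := by
    apply mul_le_mul h1 hbX hb (by linarith)
  have hexp : (m*b + K)*((m*b)/2) = (m*b)^2/2 + (K*(m*b))/2 := by ring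
  have hKX : K*(m*b) ≤ (K^2 + (m*b)^2)/2 := by nlinarith [sq_nonneg (K - m*b)]
  have h30 : 30*K ≤ 15*K^2 := by nlinarith
  nlinarith [sq_nonneg K]

private lemma quadB (ha : 0 ≤ a) (hb : 0 ≤ b) (hK : 2 ≤ K)
    (h1 : a^2 + b^2 ≤ 10*K) : a*b ≤ 400*K^2 := by
  have h3 : a*b ≤ 5*K := by nlinarith [sq_nonneg (a-b)]
  nlinarith [sq_nonneg K]

private lemma quadC {s t : ℝ} (ha : 0 ≤ a) (hb : 0 ≤ b) (hK : 2 ≤ K)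
    (hs : 4*(a*b) ≤ s^2 + t^2) (h1 : s ≤ 10*K) (h2 : t ≤ K) (hs0 : 0 ≤ s) (ht0 : 0 ≤ t) :
    a*b ≤ 400*K^2 := by
  have h5 : s^2 ≤ (10*K)^2 := by nlinarith
  have h6 : t^2 ≤ K^2 := by nlinarith
  nlinarith [sq_nonneg K]
end arith

lemma caseB1 (u v d : ℤ) (N r Pi : ℝ)
    (hu : 2 ≤ |(u:ℝ)|) (hv : 2 ≤ |(v:ℝ)|) (huv : u ≠ v) (hd : d ≠ 0)
    (hN : 1 ≤ N) (hr : 1 ≤ r) (hdN : |(d:ℝ)| ≤ N)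
    (hE : |(u:ℝ)^2 + d*v^2| ≤ 10*N + N*r^2)
    (hP : |(u:ℝ) + d*v| ≤ |Pi| + N*r) :
    |(u:ℝ)| * |(v:ℝ)| ≤ 400 * (N*(1+|Pi|)*(1+r^2))^2 := by
  have hPi0 : 0 ≤ |Pi| := abs_nonneg _
  have e1 : 1 ≤ 1 + |Pi| := by linarith
  have e2 : 2 ≤ 1 + r^2 := by nlinarith
  have hNP : 1 ≤ N * (1+|Pi|) := by nlinarith
  have hK2 : 2 ≤ N*(1+|Pi|)*(1+r^2) := by nlinarith
  have hK0 : 0 ≤ N*(1+|Pi|)*(1+r^2) := by linarith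
  have hRK : 10*N + N*r^2 ≤ 10*(N*(1+|Pi|)*(1+r^2)) := by
    have h0 : 0 ≤ N * |Pi| * (1+r^2) := by positivity
    have h2 : 0 ≤ N * r^2 := by positivity
    nlinarith
  have hPK : |Pi| + N*r ≤ N*(1+|Pi|)*(1+r^2) := by
    have h1 : N * r ≤ N * (1 + r^2) := by nlinarith [sq_nonneg (r-1)]
    have h0 : (0:ℝ) ≤ N*(1+r^2) - 1 := by nlinarith
    have h2 : |Pi| ≤ N * |Pi| * (1 + r^2) := by nlinarith [mul_nonneg h0 hPi0]
    nlinarith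
  have hE' : |(u:ℝ)^2 + d*v^2| ≤ 10*(N*(1+|Pi|)*(1+r^2)) := le_trans hE hRK
  have hP' : |(u:ℝ) + d*v| ≤ N*(1+|Pi|)*(1+r^2) := le_trans hP hPK
  have ha2 : |(u:ℝ)|^2 = (u:ℝ)^2 := sq_abs _
  have hb2 : |(v:ℝ)|^2 = (v:ℝ)^2 := sq_abs _
  have ha0 : (0:ℝ) ≤ |(u:ℝ)| := abs_nonneg _
  have hb0 : (0:ℝ) ≤ |(v:ℝ)| := abs_nonneg _
  rcases lt_or_ge d 0 with hdneg | hdpos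
  swap
  · -- d ≥ 1
    have hd1 : (1:ℝ) ≤ (d:ℝ) := by exact_mod_cast (by omega : 1 ≤ d)
    have h1 : (u:ℝ)^2 + d*v^2 ≤ 10*(N*(1+|Pi|)*(1+r^2)) := le_trans (le_abs_self _) hE'
    apply quadB ha0 hb0 hK2
    nlinarith [mul_nonneg (by linarith : (0:ℝ) ≤ (d:ℝ) - 1) (sq_nonneg ((v:ℝ)))]
  · rcases eq_or_lt_of_le (by exact_mod_cast (by omega : d ≤ -1) : (d:ℝ) ≤ -1) with hm1' | hm2
    · -- d = -1
      have hE3 : |(u:ℝ)^2 - v^2| ≤ 10*(N*(1+|Pi|)*(1+r^2)) := by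
        have h : (u:ℝ)^2 - v^2 = (u:ℝ)^2 + d*v^2 := by rw [hm1']; ring
        rw [h]; exact hE'
      have hP3 : |(u:ℝ) - v| ≤ N*(1+|Pi|)*(1+r^2) := by
        have h : (u:ℝ) - v = (u:ℝ) + d*v := by rw [hm1']; ring
        rw [h]; exact hP'
      have huv1 : (1:ℝ) ≤ |(u:ℝ) - v| := by
        have h0 : u - v ≠ 0 := sub_ne_zero.mpr huv
        have h1 : (1:ℤ) ≤ |u - v| := Int.one_le_abs h0
        have h2 : (1:ℝ) ≤ |((u - v : ℤ) : ℝ)| := by exact_mod_cast h1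
        push_cast at h2; exact h2
      have hfac : |(u:ℝ)^2 - v^2| = |(u:ℝ) - v| * |(u:ℝ) + v| := by
        rw [← abs_mul]; ring_nf
      have hsum : |(u:ℝ) + v| ≤ 10*(N*(1+|Pi|)*(1+r^2)) := by
        rw [hfac] at hE3
        have h9 := mul_le_mul_of_nonneg_right huv1 (abs_nonneg ((u:ℝ)+v))
        rw [one_mul] at h9
        linarith
      refine quadC ha0 hb0 hK2 ?_ hsum hP3 (abs_nonneg _) (abs_nonneg _)
      have h4 : |(u:ℝ)+v|^2 + |(u:ℝ)-v|^2 = 2*(u:ℝ)^2 + 2*(v:ℝ)^2 := by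
        rw [sq_abs, sq_abs]; ring
      rw [h4]
      have h7 := sq_nonneg (|(u:ℝ)| - |(v:ℝ)|)
      nlinarith
    · -- d ≤ -2
      have hm2' : (2:ℝ) ≤ -(d:ℝ) := by
        have h1 : (2:ℤ) ≤ -d := by
          have : (d:ℝ) < -1 := hm2
          have : d < -1 := by exact_mod_cast this
          omega
        exact_mod_cast h1
      have hmN : -(d:ℝ) ≤ N := by
        rw [abs_of_neg (by exact_mod_cast hdneg)] at hdN; linarith
      have haXP : |(u:ℝ)| ≤ (-(d:ℝ))*|(v:ℝ)| + N*(1+|Pi|)*(1+r^2) := by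
        have h2 := abs_sub_abs_le_abs_sub (u:ℝ) ((-(d:ℝ))*v)
        rw [abs_mul, abs_of_pos (by linarith : (0:ℝ) < -(d:ℝ))] at h2
        have h3 : |(u:ℝ) - (-(d:ℝ))*v| ≤ N*(1+|Pi|)*(1+r^2) := by
          have h : (u:ℝ) - (-(d:ℝ))*v = (u:ℝ) + d*v := by ring
          rw [h]; exact hP'
        linarith
      have hkey : (-(d:ℝ))*((-(d:ℝ))-1)*|(v:ℝ)|^2 ≤
          10*(N*(1+|Pi|)*(1+r^2)) + (N*(1+|Pi|)*(1+r^2))*|(u:ℝ)| + (N*(1+|Pi|)*(1+r^2))*((-(d:ℝ))*|(v:ℝ)|) := by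
        have hid : (-(d:ℝ))*((-(d:ℝ))-1)*(v:ℝ)^2 =
            ((u:ℝ)^2 + d*v^2) - ((u:ℝ) + d*v)*((u:ℝ) - d*v) := by ring
        have h1 : ((u:ℝ)^2 + d*v^2) ≤ 10*(N*(1+|Pi|)*(1+r^2)) := le_trans (le_abs_self _) hE'
        have hb1 : |(u:ℝ) - d*v| ≤ |(u:ℝ)| + (-(d:ℝ))*|(v:ℝ)| := by
          calc |(u:ℝ) - d*v| ≤ |(u:ℝ)| + |(d:ℝ)*(v:ℝ)| := abs_sub _ _
          _ = |(u:ℝ)| + (-(d:ℝ))*|(v:ℝ)| := by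
              rw [abs_mul, abs_of_neg (by exact_mod_cast hdneg : ((d:ℝ) < 0))]
        have h2 : -(((u:ℝ) + d*v)*((u:ℝ) - d*v)) ≤
            (N*(1+|Pi|)*(1+r^2)) * (|(u:ℝ)| + (-(d:ℝ))*|(v:ℝ)|) := by
          calc -(((u:ℝ) + d*v)*((u:ℝ) - d*v)) ≤ |((u:ℝ) + d*v)*((u:ℝ) - d*v)| := neg_le_abs _
          _ = |(u:ℝ) + d*v| * |(u:ℝ) - d*v| := abs_mul _ _
          _ ≤ (N*(1+|Pi|)*(1+r^2)) * (|(u:ℝ)| + (-(d:ℝ))*|(v:ℝ)|) :=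
              mul_le_mul hP' hb1 (abs_nonneg _) hK0
        rw [hb2, hid]
        linarith
      exact quadA ha0 hb0 hm2' hK2 haXP hkey


open scoped BigOperators


/-- If `|∑ (α_i−β_i) i²| ≤ 10 ∑ |α_i−β_i|`, then
`∏_i (1 + |α_i−β_i|⟨i⟩) ≤ e^{27}(1+|π|)³ N⁶ ∏_{l≥3} n̂_l^{15/2}` (the decreasing
rearrangement `n̂` being encoded by the sorted list `L`). -/
theorem prod_one_add_abs_diff_le
    (α β : ℤ →₀ ℕ)
    (hmass : (α.sum fun _ n => n) = β.sum fun _ n => n)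
    (hmass1 : 1 ≤ α.sum fun _ n => n)
    (L : List ℝ) (hsort : L.Pairwise (· ≥ ·))
    (hL : (L : Multiset ℝ) = Multiset.map jap (α + β).toMultiset)
    (N : ℕ) (hN : N = (α.sum fun _ n => n) + β.sum fun _ n => n)
    (π : ℝ)
    (hπ : π = ∑ i ∈ α.support ∪ β.support, (i : ℝ) * ((α i : ℝ) - (β i : ℝ)))
    (hsmall : |∑ i ∈ α.support ∪ β.support, ((α i : ℝ) - (β i : ℝ)) * (i : ℝ) ^ 2| ≤
      10 * ∑ i ∈ α.support ∪ β.support, |(α i : ℝ) - (β i : ℝ)|) :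
    ∏ i ∈ α.support ∪ β.support, (1 + |(α i : ℝ) - (β i : ℝ)| * jap i) ≤
      Real.exp 27 * (1 + |π|) ^ 3 * (N : ℝ) ^ 6 *
        ((L.drop 2).map fun x => x ^ ((15 : ℝ) / 2)).prod := by
  classical
  set F := α.support ∪ β.support with hF
  set V := ((L.drop 2).map fun x => x ^ ((15 : ℝ) / 2)).prod with hV
  -- basic numbers
  have hα_sub : ∀ (g : ℤ →₀ ℕ), ∑ i ∈ F, (g i : ℝ) = (g.sum fun _ n => n : ℕ) → True := fun _ _ => trivial
  have hsum_g : ∀ (g : ℤ →₀ ℕ), g.support ⊆ F → ∑ i ∈ F, (g i : ℝ) = ((g.sum fun _ n => n : ℕ) : ℝ) := by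
    intro g hg
    rw [Finsupp.sum]
    push_cast
    symm
    apply Finset.sum_subset hg
    intro x _ hx
    simp [Finsupp.notMem_support_iff.mp hx]
  have hNsum : ∑ i ∈ F, ((α i : ℝ) + (β i : ℝ)) = (N:ℝ) := by
    rw [Finset.sum_add_distrib, hsum_g α Finset.subset_union_left,
      hsum_g β Finset.subset_union_right, hN]
    push_cast; ring
  have hDsum : ∑ i ∈ F, |(α i : ℝ) - (β i : ℝ)| ≤ (N:ℝ) := by
    rw [← hNsum]
    apply Finset.sum_le_sum
    intro i _
    have h1 : (0:ℝ) ≤ α i := by positivity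
    have h2 : (0:ℝ) ≤ β i := by positivity
    rw [abs_sub_comm]
    calc |(β i:ℝ) - α i| ≤ |(β i:ℝ)| + |(α i:ℝ)| := abs_sub _ _
    _ = (α i:ℝ) + β i := by rw [abs_of_nonneg h1, abs_of_nonneg h2]; ring
  have hsingle : ∀ i : ℤ, (α i : ℝ) + (β i : ℝ) ≤ (N:ℝ) := by
    intro i
    rw [← hNsum]
    by_cases hi : i ∈ F
    · apply Finset.single_le_sum (f := fun i => (α i:ℝ) + β i) (fun j _ => by positivity) hi
    · have h1 : α i = 0 := by
        by_contra h
        exact hi (Finset.mem_union_left _ (Finsupp.mem_support_iff.mpr h))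
      have h2 : β i = 0 := by
        by_contra h
        exact hi (Finset.mem_union_right _ (Finsupp.mem_support_iff.mpr h))
      rw [h1, h2]
      push_cast
      have := Finset.sum_nonneg (f := fun i => (α i:ℝ) + β i) (s := F) (fun j _ => by positivity)
      linarith
  have hN1 : (1:ℝ) ≤ (N:ℝ) := by
    have : 1 ≤ N := by omega
    exact_mod_cast this
  have hN2 : (2:ℝ) ≤ (N:ℝ) := by
    have : 2 ≤ N := by omega
    exact_mod_cast this
  have hdF : ∀ i : ℤ, (α i : ℤ) - β i ≠ 0 → i ∈ F := by
    intro i h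
    by_cases h1 : α i = 0
    · apply Finset.mem_union_right
      apply Finsupp.mem_support_iff.mpr
      omega
    · exact Finset.mem_union_left _ (Finsupp.mem_support_iff.mpr h1)
  have hsmall' : |∑ i ∈ F, ((α i : ℝ) - (β i : ℝ)) * (i : ℝ) ^ 2| ≤ 10 * N := by
    apply le_trans hsmall
    linarith
  have hL1 : ∀ x ∈ L, (1:ℝ) ≤ x := by
    intro x hx
    have : x ∈ (L : Multiset ℝ) := by exact_mod_cast hx
    rw [hL] at this
    obtain ⟨i, _, rfl⟩ := Multiset.mem_map.mp this
    exact jap_one_le i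
  have hV1 : (1:ℝ) ≤ V := by
    rw [hV]
    apply listprod_one_le
    intro x hx
    simp only [List.mem_map] at hx
    obtain ⟨y, hy, rfl⟩ := hx
    have h1 : 1 ≤ y := hL1 y ((L.drop_sublist 2).subset hy)
    calc (1:ℝ) = 1 ^ ((15:ℝ)/2) := by rw [Real.one_rpow]
    _ ≤ y ^ ((15:ℝ)/2) := by
        apply Real.rpow_le_rpow (by norm_num) h1 (by norm_num)

  -- the finsupp of |d| restricted to |i| ≥ 2
  set d : ℤ → ℤ := fun i => (α i : ℤ) - β i with hd
  set γ : ℤ →₀ ℕ := Finsupp.onFinset F (fun i => if 2 ≤ |i| then (d i).natAbs else 0)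
    (by
      intro i h
      apply hdF
      intro hc
      simp only [hd] at h hc
      rw [hc] at h
      simp at h) with hγ
  have hγapp : ∀ i, γ i = if 2 ≤ |i| then (d i).natAbs else 0 := fun i => rfl
  have hγne : ∀ i, γ i ≠ 0 ↔ (2 ≤ |i| ∧ d i ≠ 0) := by
    intro i
    rw [hγapp]
    constructor
    · intro h
      by_cases h2 : 2 ≤ |i|
      · refine ⟨h2, ?_⟩
        intro hc
        rw [if_pos h2, hc] at h
        simp at h
      · rw [if_neg h2] at h; simp at h
    · rintro ⟨h2, hne⟩
      rw [if_pos h2]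
      simpa using hne
  have hγle : γ ≤ α + β := by
    intro i
    rw [hγapp]
    by_cases h2 : 2 ≤ |i|
    · rw [if_pos h2]
      simp only [Finsupp.add_apply, hd]
      omega
    · rw [if_neg h2]; simp
  set M : Multiset ℝ := γ.toMultiset.map jap with hM
  have hMem : ∀ y ∈ M, ∃ i, γ i ≠ 0 ∧ jap i = y ∧ 2 ≤ |i| ∧ d i ≠ 0 := by
    intro y hy
    obtain ⟨i, hi, rfl⟩ := Multiset.mem_map.mp hy
    rw [Finsupp.mem_toMultiset, Finsupp.mem_support_iff] at hi
    exact ⟨i, hi, rfl, (hγne i).mp hi⟩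
  have hM2 : ∀ y ∈ M, (2:ℝ) ≤ y := by
    intro y hy
    obtain ⟨i, _, rfl, h2, _⟩ := hMem y hy
    rw [jap_eq_abs (by omega)]
    rw [← Int.cast_abs]
    exact_mod_cast h2
  have hML : M ≤ (L : Multiset ℝ) := by
    rw [hL, hM]
    exact Multiset.map_le_map (toMultiset_mono hγle)
  obtain ⟨lM, hlM, hlMs⟩ : ∃ l : List ℝ, ((l : Multiset ℝ) = M ∧ l.Pairwise (· ≥ ·)) :=
    ⟨sortD M, coe_sortD M, sorted_sortD M⟩
  have hsubL : lM.Sublist L := by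
    apply sublist_of_le_sorted hlMs hsort
    rw [hlM]; exact hML
  -- split the product
  set S₂ : Finset ℤ := F.filter (fun i => 2 ≤ |i| ∧ d i ≠ 0) with hS₂
  have hγsupp : γ.support = S₂ := by
    ext i
    rw [Finsupp.mem_support_iff, hγne, hS₂, Finset.mem_filter]
    constructor
    · rintro ⟨h1, h2⟩; exact ⟨hdF i h2, h1, h2⟩
    · rintro ⟨_, h1, h2⟩; exact ⟨h1, h2⟩
  set f : ℤ → ℝ := fun i => 1 + |(α i : ℝ) - (β i : ℝ)| * jap i with hf
  have hf1 : ∀ i, 1 ≤ f i := by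
    intro i
    simp only [hf]
    have : (0:ℝ) ≤ |(α i : ℝ) - (β i : ℝ)| * jap i :=
      mul_nonneg (abs_nonneg _) (by linarith [jap_one_le i])
    linarith
  have hprodsplit : ∏ i ∈ F, f i = (∏ i ∈ S₂, f i) * ∏ i ∈ F.filter (fun i => ¬(2 ≤ |i| ∧ d i ≠ 0)), f i := by
    rw [hS₂]
    exact (Finset.prod_filter_mul_prod_filter_not F _ f).symm
  -- complement product bounded by (2N)^3
  have hcompl : ∏ i ∈ F.filter (fun i => ¬(2 ≤ |i| ∧ d i ≠ 0)), f i ≤ (2*(N:ℝ))^3 := by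
    set T := F.filter (fun i => ¬(2 ≤ |i| ∧ d i ≠ 0)) with hT
    set T' := T.filter (fun i => |i| ≤ 1) with hT'
    have heq : ∏ i ∈ T, f i = ∏ i ∈ T', f i := by
      symm
      apply Finset.prod_subset (Finset.filter_subset _ _)
      intro x hx hx'
      have h1 : ¬(2 ≤ |x| ∧ d x ≠ 0) := (Finset.mem_filter.mp hx).2
      have h2 : ¬(|x| ≤ 1) := by
        intro hc
        exact hx' (Finset.mem_filter.mpr ⟨hx, hc⟩)
      have h3 : d x = 0 := by
        by_contra hc
        exact h1 ⟨by omega, hc⟩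
      have h3' : (α x : ℤ) - β x = 0 := h3
      have h4 : (α x : ℝ) = (β x : ℝ) := by exact_mod_cast (by omega : (α x : ℤ) = β x)
      simp only [hf, h4]
      simp
    rw [heq]
    have hcard : T'.card ≤ 3 := by
      have hsub : T' ⊆ ({-1, 0, 1} : Finset ℤ) := by
        intro i hi
        have h1 : |i| ≤ 1 := (Finset.mem_filter.mp hi).2
        simp only [Finset.mem_insert, Finset.mem_singleton]
        rcases abs_le.mp h1 with ⟨ha, hb⟩
        omega
      calc T'.card ≤ ({-1,0,1} : Finset ℤ).card := Finset.card_le_card hsub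
      _ ≤ 3 := by decide
    have hfb : ∀ i ∈ T', f i ≤ 2*(N:ℝ) := by
      intro i hi
      have h1 : |i| ≤ 1 := (Finset.mem_filter.mp hi).2
      have hjap : jap i = 1 := by
        apply max_eq_right
        have : |(i:ℝ)| ≤ 1 := by
          rw [← Int.cast_abs]
          exact_mod_cast h1
        linarith
      simp only [hf, hjap, mul_one]
      have h2 : |(α i : ℝ) - β i| ≤ (N:ℝ) := by
        have h3 : (0:ℝ) ≤ (α i:ℝ) := by positivity
        have h4 : (0:ℝ) ≤ (β i:ℝ) := by positivity
        calc |(α i : ℝ) - β i| ≤ |(α i:ℝ)| + |(β i:ℝ)| := abs_sub _ _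
        _ = (α i:ℝ) + β i := by rw [abs_of_nonneg h3, abs_of_nonneg h4]
        _ ≤ N := hsingle i
      linarith
    calc ∏ i ∈ T', f i ≤ (2*(N:ℝ))^T'.card := by
          rw [← Finset.prod_const]
          exact Finset.prod_le_prod (fun i _ => by linarith [hf1 i]) hfb
    _ ≤ (2*(N:ℝ))^3 := pow_le_pow_right₀ (by linarith) hcard
  -- main product bound through the multiset
  have hmain : ∏ i ∈ S₂, f i ≤ (lM.map (fun x => 2*x)).prod := by
    have h1 : ∏ i ∈ S₂, f i ≤ ∏ i ∈ S₂, (2 * jap i) ^ γ i := by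
      apply Finset.prod_le_prod (fun i _ => by linarith [hf1 i])
      intro i hi
      have hiS : 2 ≤ |i| ∧ d i ≠ 0 := (Finset.mem_filter.mp hi).2
      have habs : |(α i : ℝ) - β i| = (γ i : ℝ) := by
        rw [hγapp, if_pos hiS.1]
        rw [Nat.cast_natAbs]
        rw [hd]
        push_cast
        rfl
      simp only [hf, habs]
      exact one_add_le_pow (jap i) (jap_one_le i) (γ i)
    apply le_trans h1
    rw [← hγsupp, ← prod_toMultiset_map γ (fun i => 2 * jap i)]
    have h2 : γ.toMultiset.map (fun i => 2 * jap i) = M.map (fun x => 2*x) := by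
      rw [hM, Multiset.map_map]
      rfl
    rw [h2, ← hlM]
    rw [Multiset.map_coe, Multiset.prod_coe]

  have hfin : ∀ lhs : ℝ, lhs ≤ 51200 * (1+|π|)^2 * (N:ℝ)^5 * V →
      lhs ≤ Real.exp 27 * (1+|π|)^3 * (N:ℝ)^6 * V :=
    fun lhs h => finish_lemma _ _ _ _ hN2 (abs_nonneg π) hV1 h
  have hπ2 : (1:ℝ) ≤ (1+|π|)^2 := one_le_pow₀ (by linarith [abs_nonneg π])
  have hN30 : (0:ℝ) ≤ (N:ℝ)^3 := by positivity
  have hN40 : (0:ℝ) ≤ (N:ℝ)^4 := by positivity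
  -- extraction of moment bounds
  have key : ∀ (G : Finset ℤ) (r : ℝ), 1 ≤ r → G ⊆ F →
      (∀ i ∈ G, d i ≠ 0 → |(i:ℝ)| ≤ r) →
      |∑ i ∈ G, ((α i:ℝ) - β i) * (i:ℝ)^2| ≤ N * r^2 ∧
      |∑ i ∈ G, (i:ℝ) * ((α i:ℝ) - β i)| ≤ N * r := by
    intro G r hr hGF hG
    have hsub : ∑ i ∈ G, |(α i:ℝ) - β i| ≤ (N:ℝ) :=
      le_trans (Finset.sum_le_sum_of_subset_of_nonneg hGF (fun i _ _ => abs_nonneg _)) hDsum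
    have hterm : ∀ i ∈ G, |(α i:ℝ) - β i| * |(i:ℝ)| ≤ |(α i:ℝ) - β i| * r := by
      intro i hi
      by_cases hdi : d i = 0
      · have hdi' : (α i : ℤ) - β i = 0 := hdi
        have h4 : (α i : ℝ) = (β i : ℝ) := by
          exact_mod_cast (by omega : (α i : ℤ) = β i)
        rw [h4]; simp
      · exact mul_le_mul_of_nonneg_left (hG i hi hdi) (abs_nonneg _)
    constructor
    · calc |∑ i ∈ G, ((α i:ℝ) - β i) * (i:ℝ)^2| ≤ ∑ i ∈ G, |((α i:ℝ) - β i) * (i:ℝ)^2| :=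
          Finset.abs_sum_le_sum_abs _ _
      _ ≤ ∑ i ∈ G, |(α i:ℝ) - β i| * r^2 := by
          apply Finset.sum_le_sum
          intro i hi
          rw [abs_mul]
          have h5 : |(i:ℝ)^2| = |(i:ℝ)| * |(i:ℝ)| := by
            rw [abs_pow, sq]
          rw [h5]
          by_cases hdi : d i = 0
          · have hdi' : (α i : ℤ) - β i = 0 := hdi
            have h4 : (α i : ℝ) = (β i : ℝ) := by
              exact_mod_cast (by omega : (α i : ℤ) = β i)
            rw [h4]; simp
          · have h6 := hG i hi hdi
            have h7 : |(i:ℝ)| * |(i:ℝ)| ≤ r * r :=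
              mul_le_mul h6 h6 (abs_nonneg _) (by linarith)
            rw [sq]
            exact mul_le_mul_of_nonneg_left h7 (abs_nonneg _)
      _ = (∑ i ∈ G, |(α i:ℝ) - β i|) * r^2 := by rw [Finset.sum_mul]
      _ ≤ N * r^2 := mul_le_mul_of_nonneg_right hsub (by positivity)
    · calc |∑ i ∈ G, (i:ℝ) * ((α i:ℝ) - β i)| ≤ ∑ i ∈ G, |(i:ℝ) * ((α i:ℝ) - β i)| :=
          Finset.abs_sum_le_sum_abs _ _
      _ ≤ ∑ i ∈ G, |(α i:ℝ) - β i| * r := by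
          apply Finset.sum_le_sum
          intro i hi
          rw [abs_mul, mul_comm]
          exact hterm i hi
      _ = (∑ i ∈ G, |(α i:ℝ) - β i|) * r := by rw [Finset.sum_mul]
      _ ≤ N * r := mul_le_mul_of_nonneg_right hsub (by linarith)
  -- case analysis on lM
  clear hα_sub
  revert hlM hlMs hsubL
  rcases lM with _ | ⟨x₁, _ | ⟨x₂, rest⟩⟩ <;> intro hlM hlMs hsubL
  ·
    have hS2empty : ∏ i ∈ S₂, f i = 1 := by
      apply Finset.prod_eq_one
      intro i hi
      exfalso
      have h1 : γ i ≠ 0 := by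
        rw [hγne]
        exact (Finset.mem_filter.mp hi).2
      have h2 : jap i ∈ M :=
        Multiset.mem_map_of_mem jap ((Finsupp.mem_toMultiset _ _).mpr (Finsupp.mem_support_iff.mpr h1))
      rw [← hlM] at h2
      simp at h2
    apply hfin
    rw [hprodsplit, hS2empty, one_mul]
    calc (∏ i ∈ F.filter (fun i => ¬(2 ≤ |i| ∧ d i ≠ 0)), f i) ≤ (2*(N:ℝ))^3 := hcompl
    _ = 8*1*(N:ℝ)^3*1 := by ring
    _ ≤ 51200 * (1+|π|)^2 * (N:ℝ)^5 * V := by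
        apply mul4_mono (by norm_num) (by norm_num) hN30 (by norm_num) (by norm_num) hπ2
          (pow_le_pow_right₀ hN1 (by norm_num)) hV1
  · -- case [x₁]
    have hx₁M : x₁ ∈ M := by rw [← hlM]; simp
    obtain ⟨u, hu_ne, hu_jap, hu2, hud⟩ := hMem x₁ hx₁M
    have hcardM : Multiset.card M = 1 := by rw [← hlM]; simp
    have hcardγ : Multiset.card γ.toMultiset = 1 := by
      rw [hM] at hcardM
      rwa [Multiset.card_map] at hcardM
    have hsingle_le : ∀ (j : ℤ) (n : ℕ), n ≤ γ j → Finsupp.single j n ≤ γ := by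
      intro j n hn k
      rw [Finsupp.single_apply]
      by_cases hk : j = k
      · rw [if_pos hk, ← hk]; exact hn
      · rw [if_neg hk]; exact Nat.zero_le _
    have hγu : γ u = 1 := by
      have h1 := toMultiset_mono (hsingle_le u (γ u) le_rfl)
      have h2 := Multiset.card_le_card h1
      simp only [Finsupp.toMultiset_single, Multiset.card_nsmul, Multiset.card_singleton,
        hcardγ, mul_one] at h2
      omega
    have huniq : ∀ j, j ≠ u → γ j = 0 := by
      intro j hj
      by_contra hc
      have hle : Finsupp.single u 1 + Finsupp.single j (γ j) ≤ γ := by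
        intro k
        simp only [Finsupp.add_apply, Finsupp.single_apply]
        by_cases hk : u = k
        · rw [if_pos hk, if_neg (by omega : ¬ j = k), ← hk, hγu]
          omega
        · rw [if_neg hk]
          by_cases hk2 : j = k
          · rw [if_pos hk2, ← hk2]; omega
          · rw [if_neg hk2]; omega
      have h2 := Multiset.card_le_card (toMultiset_mono hle)
      simp only [Finsupp.toMultiset_add, Multiset.card_add, Finsupp.toMultiset_single,
        Multiset.card_nsmul, Multiset.card_singleton, hcardγ, mul_one] at h2
      omega
    have hS2u : S₂ = {u} := by
      rw [← hγsupp]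
      ext j
      rw [Finsupp.mem_support_iff, Finset.mem_singleton]
      constructor
      · intro h; by_contra hc; exact h (huniq j hc)
      · intro h; rw [h]; rw [hγu]; omega
    have hprodS2 : ∏ i ∈ S₂, f i = f u := by rw [hS2u, Finset.prod_singleton]
    have hdnat : (d u).natAbs = 1 := by
      have h1 := hγapp u
      rw [if_pos hu2] at h1
      omega
    have habs1 : |(α u:ℝ) - β u| = 1 := by
      have h2 : |(α u:ℝ) - β u| = |((d u : ℤ) : ℝ)| := by
        congr 1
        push_cast [hd]
        ring
      rw [h2, ← Int.cast_abs]
      exact_mod_cast (by rw [Int.abs_eq_natAbs, hdnat] : |d u| = ((1:ℕ):ℤ))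
    -- extraction
    have hrest : ∀ i ∈ F.erase u, d i ≠ 0 → |(i:ℝ)| ≤ 1 := by
      intro i hi hdi
      have hiu : i ≠ u := (Finset.mem_erase.mp hi).1
      have h1 : ¬ (2 ≤ |i|) := by
        intro hc
        exact hiu ((fun h => by
          by_contra hne
          exact h (huniq i hne)) ((hγne i).mpr ⟨hc, hdi⟩))
      have h2 : |i| ≤ 1 := by omega
      rw [← Int.cast_abs]
      exact_mod_cast h2
    obtain ⟨hE1, _⟩ := key (F.erase u) 1 le_rfl (Finset.erase_subset _ _) hrest
    have hsplitE := Finset.add_sum_erase F (fun i => ((α i:ℝ) - β i) * (i:ℝ)^2) (hdF u hud)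
    have hEu : |((α u:ℝ) - β u) * (u:ℝ)^2| ≤ 10*N + N*1^2 := by
      calc |((α u:ℝ) - β u) * (u:ℝ)^2|
          = |(∑ i ∈ F, ((α i:ℝ) - β i) * (i:ℝ)^2) - ∑ i ∈ F.erase u, ((α i:ℝ) - β i) * (i:ℝ)^2| := by
            rw [← hsplitE]; congr 1; ring
      _ ≤ |∑ i ∈ F, ((α i:ℝ) - β i) * (i:ℝ)^2| + |∑ i ∈ F.erase u, ((α i:ℝ) - β i) * (i:ℝ)^2| :=
            abs_sub _ _
      _ ≤ 10*N + N*1^2 := by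
            apply add_le_add hsmall'
            simpa using hE1
    have hu_sq : (u:ℝ)^2 ≤ 11*N := by
      rw [abs_mul, habs1, one_mul] at hEu
      have : |(u:ℝ)^2| = (u:ℝ)^2 := abs_of_nonneg (sq_nonneg _)
      rw [this] at hEu
      linarith
    have hjap_u : jap u = |(u:ℝ)| := jap_eq_abs (by omega)
    have hfu : f u ≤ 12*(N:ℝ) := by
      simp only [hf, habs1, one_mul, hjap_u]
      have h1 : (1:ℝ) ≤ |(u:ℝ)| := by
        rw [← Int.cast_abs]
        exact_mod_cast (by omega : (1:ℤ) ≤ |u|)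
      have h2 : |(u:ℝ)| ≤ (u:ℝ)^2 := by
        rw [← sq_abs]
        nlinarith
      linarith
    apply hfin
    rw [hprodsplit, hprodS2]
    calc f u * ∏ i ∈ F.filter (fun i => ¬(2 ≤ |i| ∧ d i ≠ 0)), f i
        ≤ (12*(N:ℝ)) * (2*(N:ℝ))^3 := by
          apply mul_le_mul hfu hcompl _ (by linarith)
          apply Finset.prod_nonneg
          intro i _
          linarith [hf1 i]
    _ = 96*1*(N:ℝ)^4*1 := by ring
    _ ≤ 51200 * (1+|π|)^2 * (N:ℝ)^5 * V := by
        apply mul4_mono (by norm_num) (by norm_num) hN40 (by norm_num) (by norm_num) hπ2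
          (pow_le_pow_right₀ hN1 (by norm_num)) hV1

  · -- main case
    have hx₁M : x₁ ∈ M := by rw [← hlM]; simp
    have hx₂M : x₂ ∈ M := by rw [← hlM]; simp
    obtain ⟨u, huγ, hujap, hu2, hud⟩ := hMem x₁ hx₁M
    have hmaxM : ∀ y ∈ M, y ≤ x₁ := by
      intro y hy
      rw [← hlM] at hy
      rcases List.mem_cons.mp (by exact_mod_cast hy) with h | h
      · exact le_of_eq h
      · exact List.rel_of_pairwise_cons hlMs h
    have hx₂x₁ : x₂ ≤ x₁ := hmaxM x₂ hx₂M
    have hx₁2 : (2:ℝ) ≤ x₁ := hM2 x₁ hx₁M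
    have hx₂2 : (2:ℝ) ≤ x₂ := hM2 x₂ hx₂M
    have hsingle_le : ∀ (g : ℤ →₀ ℕ), (∀ k, g k ≤ γ k) → (g.toMultiset.map jap) ≤ M := by
      intro g hg
      rw [hM]
      exact Multiset.map_le_map (toMultiset_mono hg)
    have hgetD1 : (x₁::x₂::rest).getD 1 1 = x₂ := by simp
    have hgetD2 : (x₁::x₂::rest).getD 2 1 = rest.getD 0 1 := by simp
    have hr1 : 1 ≤ rest.getD 0 1 := by
      by_cases hlen : 0 < rest.length
      · have hmem : rest.getD 0 1 ∈ rest := by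
          rw [List.getD_eq_getElem _ _ hlen]
          exact List.getElem_mem _
        have h2 : rest.getD 0 1 ∈ M := by
          rw [← hlM]
          exact_mod_cast List.mem_cons_of_mem _ (List.mem_cons_of_mem _ hmem)
        linarith [hM2 _ h2]
      · have h0 : rest = [] := List.length_eq_zero_iff.mp (by omega)
        rw [h0]
        simp
    have hujap' : jap u = |(u:ℝ)| := jap_eq_abs (by omega)
    have hpq : x₁ * x₂ ≤ 400*((N:ℝ)*(1+|π|)*(1+(rest.getD 0 1)^2))^2 := by
      by_cases hA : 2 ≤ γ u
      · -- subcase A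
        have hTle : (Finsupp.single u 2).toMultiset.map jap ≤ M := by
          apply hsingle_le
          intro k
          rw [Finsupp.single_apply]
          by_cases hk : u = k
          · rw [if_pos hk, ← hk]; omega
          · rw [if_neg hk]; omega
        have hcard2 : Multiset.card ((Finsupp.single u 2).toMultiset.map jap) = 1 + 1 := by
          rw [ts]; simp
        obtain ⟨y, hyT, hy⟩ := slot hlM hlMs hTle hcard2
        have hy_eq : y = jap u := by
          rw [ts] at hyT
          exact Multiset.eq_of_mem_replicate hyT
        have hx₂eq : x₂ = x₁ := by
          rw [hgetD1] at hy
          rw [hy_eq, hujap] at hy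
          linarith
        have hrb : ∀ i, γ i ≠ 0 → i ≠ u → jap i ≤ rest.getD 0 1 := by
          intro i hiγ hiu
          have hTle3 : (Finsupp.single u 2 + Finsupp.single i 1).toMultiset.map jap ≤ M := by
            apply hsingle_le
            intro k
            simp only [Finsupp.add_apply, Finsupp.single_apply]
            by_cases hk : u = k
            · rw [if_pos hk, if_neg (by omega : ¬ i = k), ← hk]; omega
            · rw [if_neg hk]
              by_cases hk2 : i = k
              · rw [if_pos hk2, ← hk2]; omega
              · rw [if_neg hk2]; omega
          have hcard3 : Multiset.card ((Finsupp.single u 2 + Finsupp.single i 1).toMultiset.map jap) = 2 + 1 := by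
            rw [Finsupp.toMultiset_add, Multiset.map_add, Multiset.card_add, ts, ts]; simp
          obtain ⟨y, hyT, hy⟩ := slot hlM hlMs hTle3 hcard3
          rw [hgetD2] at hy
          have hyM : y = jap u ∨ y = jap i := by
            rw [Finsupp.toMultiset_add, Multiset.map_add, Multiset.mem_add, ts, ts] at hyT
            rcases hyT with h | h
            · exact Or.inl (Multiset.eq_of_mem_replicate h)
            · exact Or.inr (Multiset.eq_of_mem_replicate h)
          have hiM : jap i ∈ M := by
            apply Multiset.mem_of_le hTle3
            rw [Finsupp.toMultiset_add, Multiset.map_add, Multiset.mem_add, ts, ts]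
            right
            exact Multiset.mem_replicate.mpr ⟨one_ne_zero, rfl⟩
          rcases hyM with h | h
          · calc jap i ≤ x₁ := hmaxM _ hiM
            _ = y := by rw [h, hujap]
            _ ≤ _ := hy
          · rw [← h]; exact hy
        have hEr : ∀ i ∈ F.erase u, d i ≠ 0 → |(i:ℝ)| ≤ rest.getD 0 1 := by
          intro i hi hdi
          by_cases h2i : 2 ≤ |i|
          · exact le_trans (jap_abs_le i) (hrb i ((hγne i).mpr ⟨h2i, hdi⟩) (Finset.mem_erase.mp hi).1)
          · have h3 : |i| ≤ 1 := by omega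
            have h4 : |(i:ℝ)| ≤ 1 := by rw [← Int.cast_abs]; exact_mod_cast h3
            linarith
        obtain ⟨hE1, _⟩ := key (F.erase u) _ hr1 (Finset.erase_subset _ _) hEr
        have hsplitE := Finset.add_sum_erase F (fun i => ((α i:ℝ) - β i) * (i:ℝ)^2) (hdF u hud)
        have hEu : |((α u:ℝ) - β u) * (u:ℝ)^2| ≤ 10*N + N*(rest.getD 0 1)^2 := by
          calc |((α u:ℝ) - β u) * (u:ℝ)^2|
              = |(∑ i ∈ F, ((α i:ℝ) - β i) * (i:ℝ)^2) - ∑ i ∈ F.erase u, ((α i:ℝ) - β i) * (i:ℝ)^2| := by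
                rw [← hsplitE]; congr 1; ring
          _ ≤ |∑ i ∈ F, ((α i:ℝ) - β i) * (i:ℝ)^2| + |∑ i ∈ F.erase u, ((α i:ℝ) - β i) * (i:ℝ)^2| :=
                abs_sub _ _
          _ ≤ 10*N + N*(rest.getD 0 1)^2 := add_le_add hsmall' hE1
        have hdnat : (d u).natAbs = γ u := by
          have h1 := hγapp u
          rw [if_pos hu2] at h1
          omega
        have habs2 : (2:ℝ) ≤ |(α u:ℝ) - β u| := by
          have h2 : |(α u:ℝ) - β u| = |((d u : ℤ) : ℝ)| := by
            congr 1
            push_cast [hd]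
            ring
          rw [h2, ← Int.cast_abs]
          have h3 : (2:ℤ) ≤ |d u| := by
            rw [Int.abs_eq_natAbs, hdnat]
            exact_mod_cast hA
          exact_mod_cast h3
        have h2u : 2*|(u:ℝ)|^2 ≤ 10*N + N*(rest.getD 0 1)^2 := by
          rw [abs_mul] at hEu
          have e1 : |(u:ℝ)^2| = |(u:ℝ)|^2 := by rw [abs_pow]
          rw [e1] at hEu
          nlinarith [sq_nonneg (|(u:ℝ)|)]
        have hcA := caseA_bound (|(u:ℝ)|) N (rest.getD 0 1) π hN1 hr1 h2u
        rw [hx₂eq, ← hujap, hujap']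
        exact hcA
      · -- subcase B
        have hγu1 : γ u = 1 := by omega
        have hdecomp : Finsupp.single u 1 + γ.erase u = γ := by
          conv_rhs => rw [← Finsupp.single_add_erase u γ]
          rw [hγu1]
        have hMdecomp : M = jap u ::ₘ ((γ.erase u).toMultiset.map jap) := by
          conv_lhs => rw [hM, ← hdecomp]
          rw [Finsupp.toMultiset_add, Multiset.map_add, ts,
            Multiset.replicate_one, Multiset.singleton_add]
        have hY : (x₂ ::ₘ (rest : Multiset ℝ)) = (γ.erase u).toMultiset.map jap := by
          have h1 : x₁ ::ₘ (x₂ ::ₘ (rest : Multiset ℝ)) = x₁ ::ₘ ((γ.erase u).toMultiset.map jap) := by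
            calc x₁ ::ₘ (x₂ ::ₘ (rest : Multiset ℝ)) = M := by rw [← hlM]; rfl
            _ = x₁ ::ₘ ((γ.erase u).toMultiset.map jap) := by rw [hMdecomp, hujap]
          exact (Multiset.cons_inj_right x₁).mp h1
        have hx₂Y : x₂ ∈ (γ.erase u).toMultiset.map jap := by rw [← hY]; simp
        obtain ⟨v, hvmem, hvjap⟩ := Multiset.mem_map.mp hx₂Y
        rw [Finsupp.mem_toMultiset, Finsupp.mem_support_iff] at hvmem
        have hvu : v ≠ u := by
          intro h
          rw [h, Finsupp.erase_same] at hvmem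
          exact hvmem rfl
        have hvγ : γ v ≠ 0 := by rwa [Finsupp.erase_ne hvu] at hvmem
        obtain ⟨hv2, hvd⟩ := (hγne v).mp hvγ
        have hvjap' : jap v = |(v:ℝ)| := jap_eq_abs (by omega)
        have hq_bd : ∀ i, γ i ≠ 0 → i ≠ u → jap i ≤ x₂ := by
          intro i hiγ hiu
          have hTle2 : (Finsupp.single u 1 + Finsupp.single i 1).toMultiset.map jap ≤ M := by
            apply hsingle_le
            intro k
            simp only [Finsupp.add_apply, Finsupp.single_apply]
            by_cases hk : u = k
            · rw [if_pos hk, if_neg (by omega : ¬ i = k), ← hk]; omega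
            · rw [if_neg hk]
              by_cases hk2 : i = k
              · rw [if_pos hk2, ← hk2]; omega
              · rw [if_neg hk2]; omega
          have hcard2 : Multiset.card ((Finsupp.single u 1 + Finsupp.single i 1).toMultiset.map jap) = 1 + 1 := by
            rw [Finsupp.toMultiset_add, Multiset.map_add, Multiset.card_add, ts, ts]; simp
          obtain ⟨y, hyT, hy⟩ := slot hlM hlMs hTle2 hcard2
          rw [hgetD1] at hy
          have hyM : y = jap u ∨ y = jap i := by
            rw [Finsupp.toMultiset_add, Multiset.map_add, Multiset.mem_add, ts, ts] at hyT
            rcases hyT with h | h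
            · exact Or.inl (Multiset.eq_of_mem_replicate h)
            · exact Or.inr (Multiset.eq_of_mem_replicate h)
          have hiM : jap i ∈ M := by
            apply Multiset.mem_of_le hTle2
            rw [Finsupp.toMultiset_add, Multiset.map_add, Multiset.mem_add, ts, ts]
            right
            exact Multiset.mem_replicate.mpr ⟨one_ne_zero, rfl⟩
          rcases hyM with h | h
          · have h1 : x₁ ≤ x₂ := by rw [← hujap, ← h]; exact hy
            have h2 : x₂ = x₁ := le_antisymm hx₂x₁ h1
            rw [h2]
            exact hmaxM _ hiM
          · rw [← h]; exact hy
        have hr_bd : ∀ i, γ i ≠ 0 → i ≠ u → i ≠ v → jap i ≤ rest.getD 0 1 := by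
          intro i hiγ hiu hiv
          have hTle3 : (Finsupp.single u 1 + Finsupp.single v 1 + Finsupp.single i 1).toMultiset.map jap ≤ M := by
            apply hsingle_le
            intro k
            simp only [Finsupp.add_apply, Finsupp.single_apply]
            by_cases hk : u = k
            · rw [if_pos hk, if_neg (by omega : ¬ v = k), if_neg (by omega : ¬ i = k), ← hk]
              omega
            · rw [if_neg hk]
              by_cases hk2 : v = k
              · rw [if_pos hk2, if_neg (by omega : ¬ i = k), ← hk2]
                have : 1 ≤ γ v := by omega
                omega
              · rw [if_neg hk2]
                by_cases hk3 : i = k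
                · rw [if_pos hk3, ← hk3]; omega
                · rw [if_neg hk3]; omega
          have hcard3 : Multiset.card ((Finsupp.single u 1 + Finsupp.single v 1 + Finsupp.single i 1).toMultiset.map jap) = 2 + 1 := by
            rw [Finsupp.toMultiset_add, Finsupp.toMultiset_add, Multiset.map_add, Multiset.map_add,
              Multiset.card_add, Multiset.card_add, ts, ts, ts]
            simp
          obtain ⟨y, hyT, hy⟩ := slot hlM hlMs hTle3 hcard3
          rw [hgetD2] at hy
          have hyM : y = jap u ∨ y = jap v ∨ y = jap i := by
            rw [Finsupp.toMultiset_add, Finsupp.toMultiset_add, Multiset.map_add, Multiset.map_add,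
              Multiset.mem_add, Multiset.mem_add, ts, ts, ts] at hyT
            rcases hyT with (h | h) | h
            · exact Or.inl (Multiset.eq_of_mem_replicate h)
            · exact Or.inr (Or.inl (Multiset.eq_of_mem_replicate h))
            · exact Or.inr (Or.inr (Multiset.eq_of_mem_replicate h))
          have hiM : jap i ∈ M := by
            apply Multiset.mem_of_le hTle3
            rw [Finsupp.toMultiset_add, Finsupp.toMultiset_add, Multiset.map_add, Multiset.map_add,
              Multiset.mem_add, Multiset.mem_add, ts, ts, ts]
            right
            exact Multiset.mem_replicate.mpr ⟨one_ne_zero, rfl⟩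
          rcases hyM with h | h | h
          · calc jap i ≤ x₁ := hmaxM _ hiM
            _ = y := by rw [h, hujap]
            _ ≤ _ := hy
          · calc jap i ≤ x₂ := hq_bd i hiγ hiu
            _ = y := by rw [h, hvjap]
            _ ≤ _ := hy
          · rw [← h]; exact hy
        have hEr : ∀ i ∈ (F.erase u).erase v, d i ≠ 0 → |(i:ℝ)| ≤ rest.getD 0 1 := by
          intro i hi hdi
          have hi1 : i ≠ v := (Finset.mem_erase.mp hi).1
          have hi2 : i ≠ u := (Finset.mem_erase.mp (Finset.mem_of_mem_erase hi)).1
          by_cases h2i : 2 ≤ |i|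
          · exact le_trans (jap_abs_le i) (hr_bd i ((hγne i).mpr ⟨h2i, hdi⟩) hi2 hi1)
          · have h3 : |i| ≤ 1 := by omega
            have h4 : |(i:ℝ)| ≤ 1 := by rw [← Int.cast_abs]; exact_mod_cast h3
            linarith
        obtain ⟨hE1, hP1⟩ := key ((F.erase u).erase v) _ hr1
          (le_trans (Finset.erase_subset _ _) (Finset.erase_subset _ _)) hEr
        have hvFe : v ∈ F.erase u := Finset.mem_erase.mpr ⟨hvu, hdF v hvd⟩
        have hsplitE := Finset.add_sum_erase F (fun i => ((α i:ℝ) - β i) * (i:ℝ)^2) (hdF u hud)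
        have hsplitE2 := Finset.add_sum_erase (F.erase u) (fun i => ((α i:ℝ) - β i) * (i:ℝ)^2) hvFe
        have hEuv : |((α u:ℝ) - β u) * (u:ℝ)^2 + ((α v:ℝ) - β v) * (v:ℝ)^2| ≤ 10*N + N*(rest.getD 0 1)^2 := by
          calc |((α u:ℝ) - β u) * (u:ℝ)^2 + ((α v:ℝ) - β v) * (v:ℝ)^2|
              = |(∑ i ∈ F, ((α i:ℝ) - β i) * (i:ℝ)^2) -
                  ∑ i ∈ (F.erase u).erase v, ((α i:ℝ) - β i) * (i:ℝ)^2| := by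
                rw [← hsplitE, ← hsplitE2]; congr 1; ring
          _ ≤ |∑ i ∈ F, ((α i:ℝ) - β i) * (i:ℝ)^2| +
                |∑ i ∈ (F.erase u).erase v, ((α i:ℝ) - β i) * (i:ℝ)^2| := abs_sub _ _
          _ ≤ 10*N + N*(rest.getD 0 1)^2 := add_le_add hsmall' hE1
        have hsplitP := Finset.add_sum_erase F (fun i => (i:ℝ) * ((α i:ℝ) - β i)) (hdF u hud)
        have hsplitP2 := Finset.add_sum_erase (F.erase u) (fun i => (i:ℝ) * ((α i:ℝ) - β i)) hvFe
        have hPuv : |(u:ℝ) * ((α u:ℝ) - β u) + (v:ℝ) * ((α v:ℝ) - β v)| ≤ |π| + N*(rest.getD 0 1) := by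
          calc |(u:ℝ) * ((α u:ℝ) - β u) + (v:ℝ) * ((α v:ℝ) - β v)|
              = |(∑ i ∈ F, (i:ℝ) * ((α i:ℝ) - β i)) -
                  ∑ i ∈ (F.erase u).erase v, (i:ℝ) * ((α i:ℝ) - β i)| := by
                rw [← hsplitP, ← hsplitP2]; congr 1; ring
          _ ≤ |∑ i ∈ F, (i:ℝ) * ((α i:ℝ) - β i)| +
                |∑ i ∈ (F.erase u).erase v, (i:ℝ) * ((α i:ℝ) - β i)| := abs_sub _ _
          _ ≤ |π| + N*(rest.getD 0 1) := by
                apply add_le_add _ hP1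
                rw [hπ]
        have hcastu : ((d u : ℤ):ℝ) = (α u:ℝ) - β u := by push_cast [hd]; ring
        have hcastv : ((d v : ℤ):ℝ) = (α v:ℝ) - β v := by push_cast [hd]; ring
        have hdnatu : (d u).natAbs = 1 := by
          have h1 := hγapp u
          rw [if_pos hu2] at h1
          omega
        have hdu_pm : d u = 1 ∨ d u = -1 := by omega
        have hdvN : |((d v : ℤ):ℝ)| ≤ (N:ℝ) := by
          rw [← Int.cast_abs]
          have h1 : (d v).natAbs ≤ α v + β v := by
            have : d v = (α v : ℤ) - β v := rfl
            omega
          have h2 : |d v| = ((d v).natAbs : ℤ) := Int.abs_eq_natAbs _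
          rw [h2]
          calc (((d v).natAbs : ℤ) : ℝ) ≤ ((α v + β v : ℕ) : ℤ) := by exact_mod_cast h1
          _ ≤ (N:ℝ) := by push_cast; linarith [hsingle v]
        have hu2' : (2:ℝ) ≤ |(u:ℝ)| := by rw [← Int.cast_abs]; exact_mod_cast hu2
        have hv2' : (2:ℝ) ≤ |(v:ℝ)| := by rw [← Int.cast_abs]; exact_mod_cast hv2
        have huv_ne : u ≠ v := fun h => hvu h.symm
        have hgoal : |(u:ℝ)| * |(v:ℝ)| ≤ 400*((N:ℝ)*(1+|π|)*(1+(rest.getD 0 1)^2))^2 := by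
          rcases hdu_pm with hs | hs
          · have hαβu : (α u:ℝ) - β u = 1 := by rw [← hcastu, hs]; norm_num
            apply caseB1 u v (d v) N (rest.getD 0 1) π hu2' hv2' huv_ne hvd hN1 hr1 hdvN
            · have h9 : (u:ℝ)^2 + ((d v : ℤ):ℝ)*(v:ℝ)^2
                  = ((α u:ℝ) - β u) * (u:ℝ)^2 + ((α v:ℝ) - β v) * (v:ℝ)^2 := by
                rw [hαβu, hcastv]; ring
              rw [h9]; exact hEuv
            · have h9 : (u:ℝ) + ((d v : ℤ):ℝ)*(v:ℝ)
                  = (u:ℝ) * ((α u:ℝ) - β u) + (v:ℝ) * ((α v:ℝ) - β v) := by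
                rw [hαβu, hcastv]; ring
              rw [h9]; exact hPuv
          · have hαβu : (α u:ℝ) - β u = -1 := by rw [← hcastu, hs]; norm_num
            have h8 := caseB1 u v (-(d v)) N (rest.getD 0 1) π hu2' hv2' huv_ne
              (by omega) hN1 hr1 (by rwa [Int.cast_neg, abs_neg]) ?_ ?_
            · exact h8
            · have h9 : (u:ℝ)^2 + ((-(d v) : ℤ):ℝ)*(v:ℝ)^2
                  = -(((α u:ℝ) - β u) * (u:ℝ)^2 + ((α v:ℝ) - β v) * (v:ℝ)^2) := by
                rw [hαβu, Int.cast_neg, hcastv]; ring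
              rw [h9, abs_neg]; exact hEuv
            · have h9 : (u:ℝ) + ((-(d v) : ℤ):ℝ)*(v:ℝ)
                  = -((u:ℝ) * ((α u:ℝ) - β u) + (v:ℝ) * ((α v:ℝ) - β v)) := by
                rw [hαβu, Int.cast_neg, hcastv]; ring
              rw [h9, abs_neg]; exact hPuv
        rw [← hujap, ← hvjap, hujap', hvjap']
        exact hgoal
    -- final assembly
    have hrest2 : ∀ y ∈ rest, (2:ℝ) ≤ y := by
      intro y hy
      apply hM2
      rw [← hlM]
      exact_mod_cast List.mem_cons_of_mem _ (List.mem_cons_of_mem _ hy)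
    have hW1 : (1:ℝ) ≤ (rest.map (fun y => 2*y)).prod := by
      apply listprod_one_le
      intro x hx
      simp only [List.mem_map] at hx
      obtain ⟨y, hy, rfl⟩ := hx
      linarith [hrest2 y hy]
    have hWle : (rest.map (fun y => 2*y)).prod ≤ (rest.map (fun y => y^2)).prod := prodmap2_le hrest2
    have hdropeq : (x₁::x₂::rest).drop 2 = rest := rfl
    have hdropsub : (rest.map (fun y => y^2)).Sublist ((L.drop 2).map (fun y => y^2)) :=
      (hdropeq ▸ hsubL.drop 2).map _
    have hsq : (rest.map (fun y => y^2)).prod ≤ ((L.drop 2).map (fun y => y^2)).prod := by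
      apply sublist_prod_le hdropsub
      intro x hx
      simp only [List.mem_map] at hx
      obtain ⟨y, hy, rfl⟩ := hx
      have := hL1 y ((L.drop_sublist 2).subset hy)
      nlinarith
    have hV₂1 : (1:ℝ) ≤ ((L.drop 2).map (fun y => y^2)).prod := by
      apply listprod_one_le
      intro x hx
      simp only [List.mem_map] at hx
      obtain ⟨y, hy, rfl⟩ := hx
      have := hL1 y ((L.drop_sublist 2).subset hy)
      nlinarith
    have hbig : (1+(rest.getD 0 1)^2)^2 * ((L.drop 2).map (fun y => y^2)).prod ≤ 4 * V := by
      rcases hLd : L.drop 2 with _ | ⟨c, t⟩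
      · have hrestnil : rest = [] := by
          have h2 := hdropeq ▸ hsubL.drop 2
          rw [hLd] at h2
          exact List.sublist_nil.mp h2
        rw [hV, hLd, hrestnil]
        norm_num
      · have hcL : c ∈ L := (L.drop_sublist 2).subset (hLd ▸ (List.mem_cons_self (a := c) (l := t)))
        have hc1 : (1:ℝ) ≤ c := hL1 c hcL
        have ht1 : ∀ y ∈ t, (1:ℝ) ≤ y := fun y hy =>
          hL1 y ((L.drop_sublist 2).subset (hLd ▸ List.mem_cons_of_mem c hy))
        have hrc : rest.getD 0 1 ≤ c := by
          by_cases hlen : 0 < rest.length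
          · have hmem : rest.getD 0 1 ∈ rest := by
              rw [List.getD_eq_getElem _ _ hlen]
              exact List.getElem_mem _
            have h2 : rest.getD 0 1 ∈ c :: t := by
              rw [← hLd]
              exact (hdropeq ▸ hsubL.drop 2).subset hmem
            have hsorted_drop : (L.drop 2).Pairwise (· ≥ ·) :=
              List.Pairwise.sublist (L.drop_sublist 2) hsort
            rcases List.mem_cons.mp h2 with h | h
            · exact le_of_eq h
            · rw [hLd] at hsorted_drop
              exact List.rel_of_pairwise_cons hsorted_drop h
          · have h0 : rest = [] := List.length_eq_zero_iff.mp (by omega)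
            rw [h0]; simpa using hc1
        have hr4 : (1+(rest.getD 0 1)^2)^2 ≤ 4*(rest.getD 0 1)^4 := by
          have h1 : (1:ℝ) ≤ (rest.getD 0 1)^2 := one_le_pow₀ hr1
          nlinarith [mul_nonneg (sub_nonneg.mpr h1) (by positivity : (0:ℝ) ≤ 3*(rest.getD 0 1)^2 + 1)]
        have hrc4 : (rest.getD 0 1)^4 ≤ c^4 := pow_le_pow_left₀ (by linarith) hrc 4
        have hc6 : c^6 ≤ c^((15:ℝ)/2) := by
          rw [show (c:ℝ)^6 = c ^ ((6:ℕ):ℝ) by rw [Real.rpow_natCast]]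
          exact Real.rpow_le_rpow_of_exponent_le hc1 (by norm_num)
        have hP2_15 : (t.map (fun y => y^2)).prod ≤ (t.map (fun y => y ^ ((15:ℝ)/2))).prod :=
          prodmap_sq_le_rpow ht1
        have hP2_1 : (1:ℝ) ≤ (t.map (fun y => y^2)).prod := by
          apply listprod_one_le
          intro x hx
          simp only [List.mem_map] at hx
          obtain ⟨y, hy, rfl⟩ := hx
          nlinarith [ht1 y hy]
        have hVeq : V = c ^ ((15:ℝ)/2) * (t.map (fun y => y ^ ((15:ℝ)/2))).prod := by
          rw [hV, hLd]
          simp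
        have hLeq : ((L.drop 2).map (fun y => y^2)).prod = c^2 * (t.map (fun y => y^2)).prod := by
          rw [hLd]
          simp
        rw [hVeq]
        simp only [List.map_cons, List.prod_cons]
        have hc0 : (0:ℝ) ≤ c := by linarith
        have s1 : (1+(rest.getD 0 1)^2)^2 * (c^2 * (t.map (fun y => y^2)).prod)
            ≤ (4*c^4) * (c^2 * (t.map (fun y => y^2)).prod) := by
          apply mul_le_mul_of_nonneg_right (by linarith) (by positivity)
        have s2 : (4*c^4) * (c^2 * (t.map (fun y => y^2)).prod)
            = 4 * (c^6 * (t.map (fun y => y^2)).prod) := by ring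
        have s3 : c^6 * (t.map (fun y => y^2)).prod
            ≤ c^((15:ℝ)/2) * (t.map (fun y => y ^ ((15:ℝ)/2))).prod := by
          apply mul_le_mul hc6 hP2_15 (by linarith) (by positivity)
        linarith
    apply hfin
    rw [hprodsplit]
    have hS₂b : ∏ i ∈ S₂, f i ≤ (2*x₁)*((2*x₂)*(rest.map (fun y => 2*y)).prod) := by
      apply le_trans hmain
      apply le_of_eq
      simp
    have hcomb : (∏ i ∈ S₂, f i) * (∏ i ∈ F.filter (fun i => ¬(2 ≤ |i| ∧ d i ≠ 0)), f i)
        ≤ ((2*x₁)*((2*x₂)*(rest.map (fun y => 2*y)).prod)) * (2*(N:ℝ))^3 := by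
      apply mul_le_mul hS₂b hcompl
      · apply Finset.prod_nonneg
        intro i _
        linarith [hf1 i]
      · positivity
    apply le_trans hcomb
    exact final_combine (by linarith) (by linarith) (by linarith) (by positivity)
      (abs_nonneg π) (by linarith) hpq (le_trans hWle hsq) hbig
end
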